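/- arXiv:2001.08032 — 4 statements merged into one kernel-verified Lean document; each statement's English description precedes it below -/
import Mathlib

section
/- Let u, v : [0,∞) → (0,∞) be continuous with u(t) ~ A·t^{-a} and v(t) ~ B·t^{-b} as t → ∞, where a > 1, 0 < b < a, and u is integrable on [0,∞). Then the convolution (u * v)(t) = ∫₀^t u(t-s) v(s) ds satisfies (u * v)(t) ~ (∫₀^∞ u(s) ds)·B·t^{-b} as t → ∞. -/
open MeasureTheory Filter Set

lemma aux_bound {f : ℝ → ℝ} {C c : ℝ} (hC : 0 < C)
    (h : Tendsto (fun t : ℝ => f t / (C * t ^ (-c))) atTop (nhds 1)) :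
    ∀ᶠ t : ℝ in atTop, f t ≤ 2 * (C * t ^ (-c)) := by
  filter_upwards [h.eventually_lt_const one_lt_two, eventually_gt_atTop 0] with t h1 ht
  have hpos : 0 < C * t ^ (-c) := mul_pos hC (Real.rpow_pos_of_pos ht _)
  exact le_of_lt ((div_lt_iff₀ hpos).mp h1)

lemma aux_shift {v : ℝ → ℝ} {B b : ℝ} (hB : 0 < B)
    (hv : Tendsto (fun t : ℝ => v t / (B * t ^ (-b))) atTop (nhds 1)) (c : ℝ) :
    Tendsto (fun t : ℝ => v (t - c) / (B * t ^ (-b))) atTop (nhds 1) := by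
  have hshift : Tendsto (fun t : ℝ => t - c) atTop atTop := by
    simpa [sub_eq_add_neg] using tendsto_atTop_add_const_right atTop (-c) tendsto_id
  have h1 : Tendsto (fun t : ℝ => v (t - c) / (B * (t - c) ^ (-b))) atTop (nhds 1) :=
    hv.comp hshift
  have h2 : Tendsto (fun t : ℝ => ((t - c) / t) ^ (-b)) atTop (nhds 1) := by
    have hd : Tendsto (fun t : ℝ => (t - c) / t) atTop (nhds 1) := by
      have hc : Tendsto (fun t : ℝ => 1 - c / t) atTop (nhds (1 - 0)) :=
        tendsto_const_nhds.sub (tendsto_const_nhds.div_atTop tendsto_id)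
      rw [sub_zero] at hc
      refine hc.congr' ?_
      filter_upwards [eventually_gt_atTop 0] with t ht
      field_simp
    simpa using hd.rpow_const (Or.inl one_ne_zero)
  have hmul := h1.mul h2
  rw [mul_one] at hmul
  refine hmul.congr' ?_
  filter_upwards [eventually_gt_atTop (max c 0 + 1)] with t ht
  have ht0 : 0 < t := by
    have := le_max_right c 0; linarith
  have htc : 0 < t - c := by
    have := le_max_left c 0; linarith
  have hnz1 : (t - c) ^ (-b) ≠ 0 := ne_of_gt (Real.rpow_pos_of_pos htc _)
  have hnz2 : t ^ (-b) ≠ 0 := ne_of_gt (Real.rpow_pos_of_pos ht0 _)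
  rw [Real.div_rpow htc.le ht0.le]
  field_simp

set_option maxHeartbeats 1000000 in
/-- convolution asymptotics: if `u ~ A t^{-a}` is integrable and
`v ~ B t^{-b}` with `a > 1`, `0 < b < a`, then
`(u*v)(t) ~ (∫₀^∞ u) · B · t^{-b}`. -/
theorem stmt8 (u v : ℝ → ℝ)
    (hu_cont : Continuous u) (hv_cont : Continuous v)
    (hu_pos : ∀ t : ℝ, 0 ≤ t → 0 < u t) (hv_pos : ∀ t : ℝ, 0 ≤ t → 0 < v t)
    (A B a b : ℝ) (hA : 0 < A) (hB : 0 < B) (ha : 1 < a) (hb : 0 < b) (hba : b < a)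
    (hu : Tendsto (fun t : ℝ => u t / (A * t ^ (-a))) atTop (nhds 1))
    (hv : Tendsto (fun t : ℝ => v t / (B * t ^ (-b))) atTop (nhds 1))
    (hu_int : IntegrableOn u (Set.Ioi 0) volume) :
    Tendsto
      (fun t : ℝ =>
        (∫ s in (0:ℝ)..t, u (t - s) * v s) /
          ((∫ s in Set.Ioi (0:ℝ), u s) * B * t ^ (-b)))
      atTop (nhds 1) := by
  set I : ℝ := ∫ s in Set.Ioi (0:ℝ), u s with hIdef
  -- positivity of I
  have hI : 0 < I := by
    have h01 : (0:ℝ) < ∫ x in (0:ℝ)..1, u x :=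
      intervalIntegral.intervalIntegral_pos_of_pos_on (hu_cont.intervalIntegrable 0 1)
        (fun x hx => hu_pos x hx.1.le) one_pos
    have heq : (∫ x in (0:ℝ)..1, u x) = ∫ x in Set.Ioc (0:ℝ) 1, u x :=
      intervalIntegral.integral_of_le one_pos.le
    have hle : (∫ x in Set.Ioc (0:ℝ) 1, u x) ≤ I := by
      refine setIntegral_mono_set hu_int ?_ (HasSubset.Subset.eventuallyLE Ioc_subset_Ioi_self)
      exact (ae_restrict_iff' measurableSet_Ioi).mpr
        (ae_of_all _ fun x hx => (hu_pos x (le_of_lt hx)).le)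
    calc (0:ℝ) < ∫ x in (0:ℝ)..1, u x := h01
      _ = _ := heq
      _ ≤ I := hle
  -- continuity of integrands
  have hcont : ∀ t : ℝ, Continuous fun s => u s * v (t - s) :=
    fun t => hu_cont.mul (hv_cont.comp (continuous_const.sub continuous_id))
  have hii : ∀ t c d : ℝ, IntervalIntegrable (fun s => u s * v (t - s)) volume c d :=
    fun t c d => (hcont t).intervalIntegrable c d
  -- reflection
  have hrefl : ∀ t : ℝ, (∫ s in (0:ℝ)..t, u (t - s) * v s)
      = ∫ s in (0:ℝ)..t, u s * v (t - s) := by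
    intro t
    have key := intervalIntegral.integral_comp_sub_left (a := 0) (b := t)
      (fun x => u x * v (t - x)) t
    simp only [sub_self, sub_zero] at key
    rw [← key]
    congr 1; funext s; simp [sub_sub_cancel]
  -- main term
  have hmain : Tendsto (fun t : ℝ =>
      (∫ s in (0:ℝ)..(t/2), u s * v (t - s)) / (B * t ^ (-b))) atTop (nhds I) := by
    obtain ⟨Tv, hTv⟩ := eventually_atTop.mp (aux_bound hB hv)
    set Tv' : ℝ := max Tv 1 with hTv'def
    have hTv'1 : (1:ℝ) ≤ Tv' := le_max_right _ _
    have hTv'0 : (0:ℝ) < Tv' := lt_of_lt_of_le one_pos hTv'1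
    set F : ℝ → ℝ → ℝ := fun t s =>
      Set.indicator (Set.Ioc 0 (t/2)) (fun s => u s * (v (t - s) / (B * t ^ (-b)))) s with hFdef
    have hdct : Tendsto (fun t => ∫ s in Set.Ioi (0:ℝ), F t s) atTop (nhds I) := by
      refine tendsto_integral_filter_of_dominated_convergence (fun s => (2 * 2 ^ b) * u s)
        ?_ ?_ ?_ ?_
      · refine Eventually.of_forall fun t => ?_
        exact (((hu_cont.mul ((hv_cont.comp
          (continuous_const.sub continuous_id)).div_const _)).aestronglyMeasurable).indicator
          measurableSet_Ioc)
      · filter_upwards [eventually_ge_atTop (2 * Tv'), eventually_gt_atTop 0] with t htTv ht0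
        refine (ae_restrict_iff' measurableSet_Ioi).mpr (ae_of_all _ fun s hs => ?_)
        have hs0 : (0:ℝ) < s := hs
        have hden : 0 < B * t ^ (-b) := mul_pos hB (Real.rpow_pos_of_pos ht0 _)
        by_cases hmem : s ∈ Set.Ioc 0 (t/2)
        · rw [hFdef]
          simp only []
          rw [Set.indicator_of_mem hmem]
          obtain ⟨_, hst⟩ := hmem
          have hts : Tv' ≤ t - s := by linarith
          have hts0 : (0:ℝ) < t - s := lt_of_lt_of_le hTv'0 hts
          have hvb : v (t - s) ≤ 2 * (B * (t - s) ^ (-b)) :=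
            hTv _ (le_trans (le_max_left _ _) hts)
          have h2 : (t - s) ^ (-b) ≤ (t/2) ^ (-b) :=
            Real.rpow_le_rpow_of_nonpos (by linarith) (by linarith) (by linarith)
          have h3 : ((t:ℝ)/2) ^ (-b) = 2 ^ b * t ^ (-b) := by
            rw [Real.div_rpow ht0.le (by norm_num : (0:ℝ) ≤ 2),
              Real.rpow_neg (by norm_num : (0:ℝ) ≤ 2) b, div_eq_mul_inv, inv_inv, mul_comm]
          have hratio : v (t - s) / (B * t ^ (-b)) ≤ 2 * 2 ^ b := by
            rw [div_le_iff₀ hden]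
            calc v (t - s) ≤ 2 * (B * (t - s) ^ (-b)) := hvb
              _ ≤ 2 * (B * ((t/2) ^ (-b))) := by
                  have := h2; nlinarith
              _ = 2 * 2 ^ b * (B * t ^ (-b)) := by rw [h3]; ring
          have hnn : 0 ≤ u s * (v (t - s) / (B * t ^ (-b))) := by
            have := (hu_pos s hs0.le).le
            have := (hv_pos (t - s) hts0.le).le
            positivity
          rw [Real.norm_eq_abs, abs_of_nonneg hnn]
          calc u s * (v (t - s) / (B * t ^ (-b))) ≤ u s * (2 * 2 ^ b) := by
                exact mul_le_mul_of_nonneg_left hratio (hu_pos s hs0.le).le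
            _ = 2 * 2 ^ b * u s := mul_comm _ _
        · rw [hFdef]
          simp only []
          rw [Set.indicator_of_notMem hmem]
          rw [norm_zero]
          have := (hu_pos s hs0.le).le
          positivity
      · exact hu_int.const_mul _
      · refine (ae_restrict_iff' measurableSet_Ioi).mpr (ae_of_all _ fun s hs => ?_)
        have hs0 : (0:ℝ) < s := hs
        have hlim : Tendsto (fun t => u s * (v (t - s) / (B * t ^ (-b)))) atTop
            (nhds (u s * 1)) := tendsto_const_nhds.mul (aux_shift hB hv s)
        rw [mul_one] at hlim
        refine hlim.congr' ?_
        filter_upwards [eventually_ge_atTop (2 * s)] with t ht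
        rw [hFdef]
        simp only []
        rw [Set.indicator_of_mem (show s ∈ Set.Ioc 0 (t/2) from ⟨hs0, by linarith⟩)]
    refine hdct.congr' ?_
    filter_upwards [eventually_gt_atTop 0] with t ht
    have h1 : ∫ s in Set.Ioi (0:ℝ), F t s
        = ∫ s in Set.Ioc (0:ℝ) (t/2), u s * (v (t - s) / (B * t ^ (-b))) := by
      rw [hFdef]
      rw [setIntegral_indicator measurableSet_Ioc, Set.inter_eq_right.mpr Ioc_subset_Ioi_self]
    rw [h1, ← intervalIntegral.integral_of_le (by linarith : (0:ℝ) ≤ t/2)]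
    simp only [← mul_div_assoc]
    rw [intervalIntegral.integral_div]
  -- remainder
  have hrem : Tendsto (fun t : ℝ =>
      (∫ s in (t/2)..t, u s * v (t - s)) / (B * t ^ (-b))) atTop (nhds 0) := by
    obtain ⟨Tu, hTu⟩ := eventually_atTop.mp (aux_bound hA hu)
    obtain ⟨Tv, hTv⟩ := eventually_atTop.mp (aux_bound hB hv)
    set Tu' : ℝ := max Tu 1 with hTu'def
    set Tv' : ℝ := max Tv 1 with hTv'def
    have hTu'1 : (1:ℝ) ≤ Tu' := le_max_right _ _
    have hTv'1 : (1:ℝ) ≤ Tv' := le_max_right _ _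
    -- choice of auxiliary exponent b'
    set b' : ℝ := (max (1 - a + b) 0 + min b 1) / 2 with hb'def
    have hx1 : max (1 - a + b) 0 < min b 1 :=
      max_lt (lt_min (by linarith) (by linarith)) (lt_min hb one_pos)
    have hmax1 : 1 - a + b ≤ max (1 - a + b) 0 := le_max_left _ _
    have hmax2 : (0:ℝ) ≤ max (1 - a + b) 0 := le_max_right _ _
    have hmin1 : min b 1 ≤ b := min_le_left _ _
    have hmin2 : min b 1 ≤ 1 := min_le_right _ _
    have hb'0 : 0 < b' := by rw [hb'def]; linarith
    have hb'1 : b' < 1 := by rw [hb'def]; linarith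
    have hb'b : b' ≤ b := by rw [hb'def]; linarith
    have hb'key : b - a + (1 - b') < 0 := by rw [hb'def]; linarith
    set M : ℝ := ∫ s in (0:ℝ)..Tv', v s with hMdef
    set C2 : ℝ := (2 * B) / (1 - b') with hC2def
    have hC2pos : 0 < C2 := div_pos (by linarith) (by linarith)
    -- bound on the partial integrals of v
    have hW : ∀ τ : ℝ, Tv' ≤ τ → (∫ s in (0:ℝ)..τ, v s) ≤ M + C2 * τ ^ (1 - b') := by
      intro τ hτ
      have hτ0 : (0:ℝ) < τ := lt_of_lt_of_le one_pos (le_trans hTv'1 hτ)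
      have hsplit : (∫ s in (0:ℝ)..τ, v s)
          = M + ∫ s in Tv'..τ, v s := by
        rw [hMdef]
        exact (intervalIntegral.integral_add_adjacent_intervals
          (hv_cont.intervalIntegrable _ _) (hv_cont.intervalIntegrable _ _)).symm
      have hiiρ : IntervalIntegrable (fun s : ℝ => 2 * B * s ^ (-b')) volume Tv' τ := by
        apply ContinuousOn.intervalIntegrable
        refine continuousOn_const.mul fun x hx => ?_
        rw [Set.uIcc_of_le hτ] at hx
        have hx0 : (0:ℝ) < x := lt_of_lt_of_le one_pos (le_trans hTv'1 hx.1)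
        exact (Real.continuousAt_rpow_const x (-b') (Or.inl hx0.ne')).continuousWithinAt
      have hmono : (∫ s in Tv'..τ, v s) ≤ ∫ s in Tv'..τ, 2 * B * s ^ (-b') := by
        refine intervalIntegral.integral_mono_on hτ (hv_cont.intervalIntegrable _ _) hiiρ ?_
        intro x hx
        have hx1' : (1:ℝ) ≤ x := le_trans hTv'1 hx.1
        have hvb : v x ≤ 2 * (B * x ^ (-b)) :=
          hTv x (le_trans (le_max_left _ _) hx.1)
        have hxe : x ^ (-b) ≤ x ^ (-b') :=
          Real.rpow_le_rpow_of_exponent_le hx1' (by linarith)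
        nlinarith
      have hval : (∫ s in Tv'..τ, 2 * B * s ^ (-b'))
          = 2 * B * ((τ ^ (-b' + 1) - Tv' ^ (-b' + 1)) / (-b' + 1)) := by
        rw [intervalIntegral.integral_const_mul, integral_rpow (Or.inl (by linarith))]
      have hTvpow : (0:ℝ) ≤ Tv' ^ (-b' + 1) := Real.rpow_nonneg (by linarith) _
      have hfinal : (∫ s in Tv'..τ, 2 * B * s ^ (-b')) ≤ C2 * τ ^ (1 - b') := by
        rw [hval]
        have hc : (0:ℝ) < -b' + 1 := by linarith
        have hmm : (τ ^ (-b' + 1) - Tv' ^ (-b' + 1)) / (-b' + 1) ≤ τ ^ (-b' + 1) / (-b' + 1) :=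
          (div_le_div_iff_of_pos_right hc).mpr (by linarith)
        have hmul := mul_le_mul_of_nonneg_left hmm (by positivity : (0:ℝ) ≤ 2 * B)
        have heq : C2 * τ ^ (1 - b') = 2 * B * (τ ^ (-b' + 1) / (-b' + 1)) := by
          rw [hC2def, show (1:ℝ) - b' = -b' + 1 by ring]; ring
        linarith
      linarith [hsplit, hmono, hfinal]
    -- the dominating function g
    set g : ℝ → ℝ := fun t =>
      (2 * A * 2 ^ a) * (M * t ^ (b - a) + C2 * 2 ^ (b' - 1) * t ^ (b - a + 1 - b')) / B
      with hgdef
    have hg0 : Tendsto g atTop (nhds 0) := by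
      have h1 : Tendsto (fun t : ℝ => t ^ (b - a)) atTop (nhds 0) := by
        have := tendsto_rpow_neg_atTop (show (0:ℝ) < a - b by linarith)
        simpa [neg_sub] using this
      have h2 : Tendsto (fun t : ℝ => t ^ (b - a + 1 - b')) atTop (nhds 0) := by
        have h2' := tendsto_rpow_neg_atTop (show (0:ℝ) < a - b - 1 + b' by linarith)
        simp only [show -(a - b - 1 + b') = b - a + 1 - b' from by ring] at h2'
        exact h2'
      have h3 : Tendsto (fun t : ℝ =>
          (2 * A * 2 ^ a) * (M * t ^ (b - a) + C2 * 2 ^ (b' - 1) * t ^ (b - a + 1 - b')) / B)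
          atTop (nhds ((2 * A * 2 ^ a) * (M * 0 + C2 * 2 ^ (b' - 1) * 0) / B)) :=
        (tendsto_const_nhds.mul ((h1.const_mul M).add
          (h2.const_mul (C2 * 2 ^ (b' - 1))))).div_const B
      rw [hgdef]
      simpa using h3
    -- squeeze
    refine squeeze_zero' ?_ ?_ hg0
    · filter_upwards [eventually_ge_atTop 0] with t ht
      apply div_nonneg ?_ (by positivity)
      apply intervalIntegral.integral_nonneg (by linarith)
      intro x hx
      have h1 : 0 ≤ x := le_trans (by linarith) hx.1
      have h2 : 0 ≤ t - x := by linarith [hx.2]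
      exact mul_nonneg (hu_pos x h1).le (hv_pos _ h2).le
    · filter_upwards [eventually_ge_atTop (2 * Tu'), eventually_ge_atTop (2 * Tv'),
        eventually_gt_atTop 0] with t htu htv ht0
      have ht2 : (0:ℝ) < t / 2 := by linarith
      have hden : 0 < B * t ^ (-b) := mul_pos hB (Real.rpow_pos_of_pos ht0 _)
      set C : ℝ := 2 * (A * (t / 2) ^ (-a)) with hCdef
      have hCpos : 0 < C := by rw [hCdef]; positivity
      -- step 1 : pointwise bound on u over [t/2, t]
      have hstep1 : (∫ s in (t/2)..t, u s * v (t - s)) ≤ C * ∫ s in (0:ℝ)..(t/2), v s := by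
        have hmono : (∫ s in (t/2)..t, u s * v (t - s))
            ≤ ∫ s in (t/2)..t, C * v (t - s) := by
          refine intervalIntegral.integral_mono_on (by linarith) (hii t _ _)
            (((hv_cont.comp (continuous_const.sub continuous_id)).intervalIntegrable
              _ _).const_mul C) ?_
          intro x hx
          have hx1' : Tu' ≤ x := le_trans (by linarith) hx.1
          have hx0 : (0:ℝ) < x := lt_of_lt_of_le (by linarith) hx.1
          have hub : u x ≤ 2 * (A * x ^ (-a)) :=
            hTu x (le_trans (le_max_left _ _) hx1')
          have hxe : x ^ (-a) ≤ (t/2) ^ (-a) :=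
            Real.rpow_le_rpow_of_nonpos ht2 hx.1 (by linarith)
          have hvnn : 0 ≤ v (t - x) := (hv_pos _ (by linarith [hx.2])).le
          have hux : u x ≤ C := by rw [hCdef]; nlinarith
          exact mul_le_mul_of_nonneg_right hux hvnn
        have hrefl2 : (∫ s in (t/2)..t, v (t - s)) = ∫ s in (0:ℝ)..(t/2), v s := by
          have key := intervalIntegral.integral_comp_sub_left (a := t/2) (b := t) v t
          rw [show t - t = (0:ℝ) by ring, show t - t/2 = t/2 by ring] at key
          exact key
        calc (∫ s in (t/2)..t, u s * v (t - s)) ≤ ∫ s in (t/2)..t, C * v (t - s) := hmono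
          _ = C * ∫ s in (t/2)..t, v (t - s) := intervalIntegral.integral_const_mul _ _
          _ = C * ∫ s in (0:ℝ)..(t/2), v s := by rw [hrefl2]
      -- step 2 : bound the v-integral
      have hstep2 : (∫ s in (0:ℝ)..(t/2), v s) ≤ M + C2 * (t/2) ^ (1 - b') :=
        hW (t/2) (by linarith)
      have hstep3 : (∫ s in (t/2)..t, u s * v (t - s))
          ≤ C * (M + C2 * (t/2) ^ (1 - b')) :=
        le_trans hstep1 (mul_le_mul_of_nonneg_left hstep2 hCpos.le)
      -- step 4 : divide and identify with g
      have hstep4 : (∫ s in (t/2)..t, u s * v (t - s)) / (B * t ^ (-b))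
          ≤ C * (M + C2 * (t/2) ^ (1 - b')) / (B * t ^ (-b)) :=
        (div_le_div_iff_of_pos_right hden).mpr hstep3
      refine le_trans hstep4 (le_of_eq ?_)
      -- algebraic identification
      have e1 : ((t:ℝ)/2) ^ (-a) = t ^ (-a) * 2 ^ a := by
        rw [Real.div_rpow ht0.le (by norm_num : (0:ℝ) ≤ 2),
          Real.rpow_neg (by norm_num : (0:ℝ) ≤ 2) a, div_eq_mul_inv, inv_inv]
      have e2 : ((t:ℝ)/2) ^ (1 - b') = t ^ (1 - b') * 2 ^ (b' - 1) := by
        rw [Real.div_rpow ht0.le (by norm_num : (0:ℝ) ≤ 2), div_eq_mul_inv,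
          show (b':ℝ) - 1 = -(1 - b') by ring,
          Real.rpow_neg (by norm_num : (0:ℝ) ≤ 2) (1 - b')]
      have ht3 : t ^ (b - a) * t ^ (-b) = t ^ (-a) := by
        rw [← Real.rpow_add ht0]; ring_nf
      have ht4 : t ^ (b - a + 1 - b') * t ^ (-b) = t ^ (-a) * t ^ (1 - b') := by
        rw [← Real.rpow_add ht0, ← Real.rpow_add ht0]; ring_nf
      simp only [hgdef, hCdef]
      rw [e1, e2]
      rw [div_eq_div_iff hden.ne' hB.ne']
      linear_combination (-(2 * A * 2 ^ a * M * B)) * ht3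
        - (2 * A * 2 ^ a * C2 * 2 ^ (b' - 1) * B) * ht4
  -- combine
  have hsum := (hmain.add hrem).div_const I
  rw [add_zero, div_self (ne_of_gt hI)] at hsum
  refine hsum.congr' ?_
  filter_upwards [eventually_ge_atTop 0] with t ht
  have hsplit : (∫ s in (0:ℝ)..(t/2), u s * v (t - s)) + ∫ s in (t/2)..t, u s * v (t - s)
      = ∫ s in (0:ℝ)..t, u s * v (t - s) :=
    intervalIntegral.integral_add_adjacent_intervals (hii t 0 (t/2)) (hii t (t/2) t)
  rw [← add_div, hsplit, ← hrefl t]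
  rw [div_div, mul_comm (B * t ^ (-b)) I, mul_assoc]
end

section
/- Let p(t,x,y) be the transition probabilities of a continuous-time symmetric homogeneous random walk on ℤ^d satisfying p(t,x,y) ~ h·t^{-d/α} as t → ∞ uniformly in the spatial variables (h > 0, d/α > 1), so that G₀(x,y) := ∫₀^∞ p(t,x,y) dt < ∞. Let β < β_c := 1/G₀(0,0) with β > 0, and let m(t,x) solve m(t,x) = 1 + β ∫₀^t m(s,x,0) ds together with the corresponding local first-moment equations. Then lim_{t→∞} m(t,x) = (1 − β(G₀(0,0) − G₀(x,0)))/(1 − β G₀(0,0)). -/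
open MeasureTheory Filter Set intervalIntegral
open scoped ENNReal

namespace Stmt10Aux



lemma enn_solve {a b c : ℝ≥0∞} (ha : a ≠ ⊤) (hc : c < 1) (h : a ≤ b + c * a) :
    a ≤ b * (1 - c)⁻¹ := by
  have hca : c * a ≠ ⊤ := ENNReal.mul_ne_top (hc.trans_le le_top).ne ha
  have h1 : a = (1 - c) * a + c * a := by
    rw [← add_mul, tsub_add_cancel_of_le hc.le, one_mul]
  have h2 : (1 - c) * a ≤ b := (ENNReal.add_le_add_iff_right hca).1 (by rw [← h1]; exact h)
  have hc0 : (1 - c) ≠ 0 := by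
    intro h0
    exact absurd (tsub_eq_zero_iff_le.1 h0) (not_le.2 hc)
  have hct : (1 - c) ≠ ⊤ := (tsub_le_self.trans_lt (by norm_num : (1:ℝ≥0∞) < ⊤)).ne
  have h3 : a ≤ b / (1 - c) :=
    (ENNReal.le_div_iff_mul_le (Or.inl hc0) (Or.inl hct)).2 (by rwa [mul_comm] at h2)
  rwa [ENNReal.div_eq_inv_mul, mul_comm] at h3

lemma ae_sub_pull {pred : ℝ → Prop} (hpred : ∀ᵐ τ ∂(volume.restrict (Ioi (0:ℝ))), pred τ)
    (t : ℝ) : ∀ᵐ s ∂(volume : Measure ℝ), 0 < t - s → pred (t - s) := by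
  rw [ae_restrict_iff' measurableSet_Ioi] at hpred
  rw [ae_iff] at hpred ⊢
  have hq := (Measure.measurePreserving_sub_left (volume : Measure ℝ) t).quasiMeasurePreserving
  refine measure_mono_null ?_ (hq.preimage_null hpred)
  intro s hs
  simp only [mem_setOf_eq, mem_preimage, not_forall, mem_Ioi] at hs ⊢
  exact hs

lemma tail_eq (f : ℝ → ℝ≥0∞) (hf : Measurable f) (s : ℝ) :
    ∫⁻ t in Ioi s, f (t - s) = ∫⁻ τ in Ioi (0:ℝ), f τ := by
  have hmp : MeasurePreserving (fun x : ℝ => x + s) volume volume :=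
    measurePreserving_add_right volume s
  have h1 : ∫⁻ t in Ioi s, f (t - s) ∂(volume : Measure ℝ)
      = ∫⁻ t in Ioi s, f (t - s) ∂(Measure.map (fun x : ℝ => x + s) volume) := by
    rw [hmp.map_eq]
  have hmf : Measurable fun t : ℝ => f (t - s) := hf.comp (measurable_id.sub_const s)
  have hmg : Measurable fun x : ℝ => x + s := measurable_id.add_const s
  rw [h1, setLIntegral_map (f := fun t : ℝ => f (t - s)) (g := fun x : ℝ => x + s)
    measurableSet_Ioi hmf hmg]
  have h2 : (fun x : ℝ => x + s) ⁻¹' Ioi s = Ioi 0 := by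
    ext x; simp [mem_Ioi]
  rw [h2]
  refine setLIntegral_congr_fun_ae measurableSet_Ioi (ae_of_all _ fun x _ => ?_)
  simp




lemma swap_Ioi (F : ℝ → ℝ → ℝ≥0∞) (hF : Measurable (Function.uncurry F)) :
    ∫⁻ t in Ioi (0:ℝ), ∫⁻ s in Ioc 0 t, F t s = ∫⁻ s in Ioi (0:ℝ), ∫⁻ t in Ioi s, F t s := by
  set G : ℝ × ℝ → ℝ≥0∞ := fun q => if 0 < q.2 ∧ q.2 ≤ q.1 then F q.1 q.2 else 0 with hGdef
  have hregion : MeasurableSet {q : ℝ × ℝ | 0 < q.2 ∧ q.2 ≤ q.1} :=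
    ((measurableSet_lt measurable_const measurable_snd).inter
      (measurableSet_le measurable_snd measurable_fst))
  have hG : Measurable G := Measurable.ite hregion hF measurable_const
  have hL1 : ∀ t : ℝ, ∫⁻ s in Ioc 0 t, F t s = ∫⁻ s, G (t, s) := by
    intro t
    rw [← lintegral_indicator measurableSet_Ioc]
    refine lintegral_congr fun s => ?_
    by_cases hs : s ∈ Ioc 0 t
    · rw [indicator_of_mem hs]
      simp only [hGdef, mem_Ioc] at hs ⊢
      rw [if_pos hs]
    · rw [indicator_of_notMem hs]
      simp only [hGdef, mem_Ioc] at hs ⊢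
      rw [if_neg hs]
  have hzeroL : ∫⁻ t in (Ioi (0:ℝ))ᶜ, ∫⁻ s, G (t, s) = 0 := by
    have : ∫⁻ t in (Ioi (0:ℝ))ᶜ, ∫⁻ s, G (t, s)
        = ∫⁻ t in (Ioi (0:ℝ))ᶜ, (0:ℝ≥0∞) := by
      refine setLIntegral_congr_fun_ae (measurableSet_Ioi.compl) (ae_of_all _ fun t ht => ?_)
      have ht' : t ≤ 0 := by simpa [mem_compl_iff, mem_Ioi] using ht
      have hz : ∀ s : ℝ, G (t, s) = 0 := by
        intro s
        show (if 0 < s ∧ s ≤ t then F t s else 0) = 0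
        rw [if_neg]
        rintro ⟨hs1, hs2⟩
        linarith
      rw [lintegral_congr hz, lintegral_zero]
    rw [this, lintegral_zero]
  have hL2 : ∫⁻ t in Ioi (0:ℝ), ∫⁻ s in Ioc 0 t, F t s = ∫⁻ t, ∫⁻ s, G (t, s) := by
    simp_rw [hL1]
    have hsplit := (lintegral_add_compl (μ := (volume : Measure ℝ)) (fun t => ∫⁻ s, G (t, s))
      (measurableSet_Ioi (a := (0:ℝ))))
    rw [← hsplit, hzeroL, add_zero]
  have hswap : ∫⁻ t, ∫⁻ s, G (t, s) = ∫⁻ s, ∫⁻ t, G (t, s) :=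
    lintegral_lintegral_swap (hG.aemeasurable)
  have hR1 : ∀ s : ℝ, 0 < s → ∫⁻ t, G (t, s) = ∫⁻ t in Ioi s, F t s := by
    intro s hs
    have h1 : ∫⁻ t, G (t, s) = ∫⁻ t, (Ici s).indicator (fun t => F t s) t := by
      refine lintegral_congr fun t => ?_
      by_cases ht : s ≤ t
      · rw [indicator_of_mem (by simpa [mem_Ici] using ht)]
        simp only [hGdef]; rw [if_pos ⟨hs, ht⟩]
      · rw [indicator_of_notMem (by simpa [mem_Ici] using ht)]
        simp only [hGdef]
        rw [if_neg (by rintro ⟨h1, h2⟩; exact ht h2)]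
    rw [h1, lintegral_indicator (measurableSet_Ici (a := s)),
      ← restrict_Ioi_eq_restrict_Ici]
  have hzeroR : ∫⁻ s in (Ioi (0:ℝ))ᶜ, ∫⁻ t, G (t, s) = 0 := by
    have : ∫⁻ s in (Ioi (0:ℝ))ᶜ, ∫⁻ t, G (t, s)
        = ∫⁻ s in (Ioi (0:ℝ))ᶜ, (0:ℝ≥0∞) := by
      refine setLIntegral_congr_fun_ae (measurableSet_Ioi.compl) (ae_of_all _ fun s hs => ?_)
      have hs' : s ≤ 0 := by simpa [mem_compl_iff, mem_Ioi] using hs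
      have hz : ∀ t : ℝ, G (t, s) = 0 := by
        intro t
        show (if 0 < s ∧ s ≤ t then F t s else 0) = 0
        rw [if_neg]
        rintro ⟨hs1, hs2⟩
        linarith
      rw [lintegral_congr hz, lintegral_zero]
    rw [this, lintegral_zero]
  have hR2 : ∫⁻ s, ∫⁻ t, G (t, s) = ∫⁻ s in Ioi (0:ℝ), ∫⁻ t in Ioi s, F t s := by
    have hsplit := (lintegral_add_compl (μ := (volume : Measure ℝ)) (fun s => ∫⁻ t, G (t, s))
      (measurableSet_Ioi (a := (0:ℝ))))
    rw [← hsplit, hzeroR, add_zero]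
    refine setLIntegral_congr_fun_ae measurableSet_Ioi (ae_of_all _ fun s hs => ?_)
    exact hR1 s (by simpa [mem_Ioi] using hs)
  rw [hL2, hswap, hR2]




lemma cont_translate (f : ℝ → ℝ) (hf : Integrable f volume) (A : Set ℝ)
    (hA : MeasurableSet A) (hAfin : volume A < ⊤) :
    Continuous fun r : ℝ => ∫ t in A, f (t - r) := by
  -- approximating sequence
  have hseq : ∀ n : ℕ, ∃ φ : ℝ → ℝ, HasCompactSupport φ ∧
      (∫ x, ‖f x - φ x‖) ≤ 1 / (n + 1) ∧ Continuous φ ∧ Integrable φ volume := by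
    intro n
    have hpos : (0:ℝ) < 1 / (n + 1) := by positivity
    obtain ⟨φ, h1, h2, h3, h4⟩ := hf.exists_hasCompactSupport_integral_sub_le hpos
    exact ⟨φ, h1, h2, h3, h4⟩
  choose φ hφc hφe hφcont hφint using hseq
  set Fn : ℕ → ℝ → ℝ := fun n r => ∫ t in A, φ n (t - r) with hFn
  have hFn_cont : ∀ n, Continuous (Fn n) := by
    intro n
    rw [continuous_iff_seqContinuous]
    intro rs r hrs
    obtain ⟨C, hC⟩ := (hφcont n).bounded_above_of_compact_support (hφc n)
    refine tendsto_integral_of_dominated_convergence (fun _ => C) ?_ ?_ ?_ ?_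
    · intro k
      exact (((hφcont n).comp (continuous_id.sub continuous_const)).aestronglyMeasurable).restrict
    · exact integrableOn_const hAfin.ne
    · intro k
      exact ae_of_all _ fun t => hC _
    · refine ae_of_all _ fun t => ?_
      have : Continuous fun r : ℝ => φ n (t - r) :=
        (hφcont n).comp (continuous_const.sub continuous_id)
      exact (this.tendsto r).comp hrs
  have hunif : TendstoUniformly Fn (fun r => ∫ t in A, f (t - r)) atTop := by
    rw [Metric.tendstoUniformly_iff]
    intro ε hε
    obtain ⟨N, hN⟩ := exists_nat_gt (1 / ε)
    rw [eventually_atTop]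
    refine ⟨N, fun n hn r => ?_⟩
    have hint1 : IntegrableOn (fun t => f (t - r)) A volume :=
      (hf.comp_sub_right r).integrableOn
    have hint2 : IntegrableOn (fun t => φ n (t - r)) A volume :=
      ((hφint n).comp_sub_right r).integrableOn
    have hsub : (∫ t in A, f (t - r)) - Fn n r = ∫ t in A, (f (t - r) - φ n (t - r)) :=
      (integral_sub hint1 hint2).symm
    have h1 : dist (∫ t in A, f (t - r)) (Fn n r) ≤ ∫ t in A, ‖f (t - r) - φ n (t - r)‖ := by
      rw [Real.dist_eq, hsub]
      simpa using norm_integral_le_integral_norm (fun t => f (t - r) - φ n (t - r)) (μ := volume.restrict A)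
    have h2 : (∫ t in A, ‖f (t - r) - φ n (t - r)‖) ≤ ∫ t : ℝ, ‖f (t - r) - φ n (t - r)‖ := by
      refine integral_mono_measure Measure.restrict_le_self ?_ ?_
      · exact ae_of_all _ fun t => norm_nonneg _
      · exact ((hf.comp_sub_right r).sub ((hφint n).comp_sub_right r)).norm
    have h3 : (∫ t : ℝ, ‖f (t - r) - φ n (t - r)‖) = ∫ x : ℝ, ‖f x - φ n x‖ := by
      exact integral_sub_right_eq_self (fun x => ‖f x - φ n x‖) r
    have h4 : (1:ℝ) / (n + 1) < ε := by
      rw [div_lt_iff₀ (by positivity)]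
      rw [div_lt_iff₀ hε] at hN
      have : (1:ℝ) < ε * N + ε := by
        calc (1:ℝ) < ε * N := by linarith
        _ ≤ ε * N + ε := by linarith
      calc (1:ℝ) < ε * N + ε := this
      _ ≤ ε * (n + 1) := by
          have : (N:ℝ) ≤ n := by exact_mod_cast hn
          nlinarith
    calc dist (∫ t in A, f (t - r)) (Fn n r) ≤ ∫ t in A, ‖f (t - r) - φ n (t - r)‖ := h1
      _ ≤ ∫ x : ℝ, ‖f x - φ n x‖ := h2.trans_eq h3
      _ ≤ 1 / (n + 1) := hφe n
      _ < ε := h4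
  exact hunif.continuous (Eventually.of_forall hFn_cont).frequently



lemma qmp_refl (t : ℝ) :
    Measure.QuasiMeasurePreserving (fun s : ℝ => t - s)
      (volume.restrict (Ioc 0 t)) (volume.restrict (Ioi 0)) := by
  have hmeas : Measurable fun s : ℝ => t - s := measurable_const.sub measurable_id
  refine ⟨hmeas, ?_⟩
  have hmp : MeasurePreserving (fun s : ℝ => t - s) volume volume :=
    Measure.measurePreserving_sub_left volume t
  have hpre : (fun s : ℝ => t - s) ⁻¹' (Ico 0 t) = Ioc 0 t := by
    ext s
    simp only [mem_preimage, mem_Ico, mem_Ioc]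
    constructor
    · rintro ⟨h1, h2⟩; constructor <;> linarith
    · rintro ⟨h1, h2⟩; constructor <;> linarith
  have hmap : Measure.map (fun s : ℝ => t - s) (volume.restrict (Ioc 0 t))
      = volume.restrict (Ico 0 t) := by
    rw [← hpre, ← Measure.restrict_map hmeas measurableSet_Ico, hmp.map_eq]
  rw [hmap]
  intro s hs
  rw [Measure.restrict_apply' measurableSet_Ioi] at hs
  rw [Measure.restrict_apply' measurableSet_Ico]
  refine measure_mono_null (fun x hx => ?_) (measure_union_null hs (measure_singleton 0))
  rcases hx with ⟨hx1, hx2, hx3⟩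
  rcases eq_or_lt_of_le hx2 with h | h
  · exact Or.inr (by simp [← h])
  · exact Or.inl ⟨hx1, h⟩

lemma glue1 (P u : ℝ → ℝ) (hP_int : IntegrableOn P (Ioi 0) volume)
    (hP_pos : ∀ τ : ℝ, 0 < τ → 0 < P τ) (t₀ : ℝ) (ht₀ : 0 < t₀)
    (hII : IntervalIntegrable (fun s => P (t₀ - s) * u s) volume 0 t₀) :
    AEStronglyMeasurable u (volume.restrict (Ioc 0 t₀)) := by
  have hf : IntegrableOn (fun s => P (t₀ - s) * u s) (Ioc 0 t₀) volume :=
    (intervalIntegrable_iff_integrableOn_Ioc_of_le ht₀.le).1 hII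
  have hfm : AEMeasurable (fun s => P (t₀ - s) * u s) (volume.restrict (Ioc 0 t₀)) :=
    hf.aestronglyMeasurable.aemeasurable
  have hker : AEMeasurable (fun s : ℝ => P (t₀ - s)) (volume.restrict (Ioc 0 t₀)) :=
    (hP_int.aestronglyMeasurable.aemeasurable).comp_quasiMeasurePreserving (qmp_refl t₀)
  have hdiv : AEMeasurable (fun s => (P (t₀ - s) * u s) / P (t₀ - s))
      (volume.restrict (Ioc 0 t₀)) := hfm.div hker
  have hae : u =ᵐ[volume.restrict (Ioc 0 t₀)] fun s => (P (t₀ - s) * u s) / P (t₀ - s) := by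
    have h1 : ∀ᵐ s : ℝ ∂volume, s ≠ t₀ := by
      rw [ae_iff]
      have : {s : ℝ | ¬ s ≠ t₀} = {t₀} := by ext s; simp
      rw [this]
      exact measure_singleton t₀
    filter_upwards [ae_restrict_of_ae h1, ae_restrict_mem measurableSet_Ioc] with s hs1 hs2
    have hlt : s < t₀ := lt_of_le_of_ne hs2.2 hs1
    have hne : P (t₀ - s) ≠ 0 := (hP_pos _ (by linarith)).ne'
    rw [mul_comm, mul_div_assoc, div_self hne, mul_one]
  exact aestronglyMeasurable_iff_aemeasurable.2 ((hdiv.congr hae.symm))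

lemma coreA (P u : ℝ → ℝ) (β : ℝ)
    (hP_int : IntegrableOn P (Ioi 0) volume)
    (hP_pos : ∀ τ : ℝ, 0 < τ → 0 < P τ)
    (hu_eq : ∀ t : ℝ, 0 ≤ t → u t = P t + β * ∫ s in (0:ℝ)..t, P (t - s) * u s) :
    AEStronglyMeasurable u (volume.restrict (Ioi 0)) := by
  set E : Set ℝ := {t | 0 < t ∧ IntervalIntegrable (fun s => P (t - s) * u s) volume 0 t}
    with hEdef
  have hfake : ∀ t : ℝ, 0 < t → t ∉ E → u t = P t := by
    intro t ht htE
    have hnii : ¬ IntervalIntegrable (fun s => P (t - s) * u s) volume 0 t := by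
      intro hii; exact htE ⟨ht, hii⟩
    rw [hu_eq t ht.le, intervalIntegral.integral_undef hnii, mul_zero, add_zero]
  by_cases hub : ∀ b : ℝ, ∃ t₀ ∈ E, b < t₀
  · -- E unbounded above
    have hQ : ∀ b : ℝ, AEStronglyMeasurable u (volume.restrict (Ioc 0 b)) := by
      intro b
      obtain ⟨t₀, ht₀E, hbt₀⟩ := hub b
      have := glue1 P u hP_int hP_pos t₀ ht₀E.1 ht₀E.2
      exact this.mono_set (Ioc_subset_Ioc_right hbt₀.le)
    have hun : Ioi (0:ℝ) = ⋃ n : ℕ, Ioc (0:ℝ) (n + 1) := by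
      ext x
      simp only [mem_Ioi, mem_iUnion, mem_Ioc]
      constructor
      · intro hx
        obtain ⟨n, hn⟩ := exists_nat_ge x
        exact ⟨n, hx, by push_cast; linarith⟩
      · rintro ⟨n, hx, _⟩; exact hx
    rw [hun]
    exact aestronglyMeasurable_iUnion_iff.2 fun n => hQ _
  · push_neg at hub
    obtain ⟨b, hb⟩ := hub
    by_cases hne : E.Nonempty
    · -- E nonempty and bounded above
      have hbddE : BddAbove E := ⟨b, fun t ht => hb t ht⟩
      set c := sSup E with hcdef
      obtain ⟨t₁, ht₁⟩ := hne
      have hc_pos : 0 < c := lt_of_lt_of_le ht₁.1 (le_csSup hbddE ht₁)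
      have hupper : ∀ t : ℝ, c < t → u t = P t := by
        intro t hct
        refine hfake t (hc_pos.trans hct) fun htE => ?_
        exact absurd (le_csSup hbddE htE) (not_le.2 hct)
      -- measurable on Ioo 0 c
      have hQ : ∀ n : ℕ, AEStronglyMeasurable u (volume.restrict (Ioc 0 (c - c / (n + 2)))) := by
        intro n
        have hlt : c - c / (n + 2) < c := by
          have : 0 < c / (n + 2) := by positivity
          linarith
        obtain ⟨t₀, ht₀E, ht₀gt⟩ := exists_lt_of_lt_csSup ⟨t₁, ht₁⟩ hlt
        exact (glue1 P u hP_int hP_pos t₀ ht₀E.1 ht₀E.2).mono_set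
          (Ioc_subset_Ioc_right ht₀gt.le)
      have hIoo : Ioo (0:ℝ) c = ⋃ n : ℕ, Ioc (0:ℝ) (c - c / (n + 2)) := by
        ext x
        simp only [mem_Ioo, mem_iUnion, mem_Ioc]
        constructor
        · rintro ⟨hx0, hxc⟩
          obtain ⟨n, hn⟩ := exists_nat_ge (c / (c - x))
          refine ⟨n, hx0, ?_⟩
          have hcx : 0 < c - x := by linarith
          rw [div_le_iff₀ hcx] at hn
          have hpos : (0:ℝ) < (n:ℝ) + 2 := by positivity
          have hdiv : c / ((n:ℝ) + 2) ≤ c - x := by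
            rw [div_le_iff₀ hpos]
            nlinarith
          linarith
        · rintro ⟨n, hx0, hxle⟩
          have : 0 < c / (n + 2) := by positivity
          exact ⟨hx0, by linarith⟩
      have hmeas_Ioo : AEStronglyMeasurable u (volume.restrict (Ioo 0 c)) := by
        rw [hIoo]
        exact aestronglyMeasurable_iUnion_iff.2 fun n => hQ n
      have hmeas_Ioi_c : AEStronglyMeasurable u (volume.restrict (Ioi c)) := by
        have hP' : AEStronglyMeasurable P (volume.restrict (Ioi c)) :=
          hP_int.aestronglyMeasurable.mono_set (Ioi_subset_Ioi hc_pos.le)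
        refine hP'.congr ?_
        filter_upwards [ae_restrict_mem measurableSet_Ioi] with t ht
        exact (hupper t ht).symm
      have hsplit : Ioi (0:ℝ) = Ioo 0 c ∪ ({c} ∪ Ioi c) := by
        ext x
        simp only [mem_Ioi, mem_union, mem_Ioo, mem_singleton_iff]
        constructor
        · intro hx
          rcases lt_trichotomy x c with h | h | h
          · exact Or.inl ⟨hx, h⟩
          · exact Or.inr (Or.inl h)
          · exact Or.inr (Or.inr h)
        · rintro (⟨h1, _⟩ | h | h)
          · exact h1
          · rw [h]; exact hc_pos
          · exact hc_pos.trans h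
      rw [hsplit]
      rw [aestronglyMeasurable_union_iff, aestronglyMeasurable_union_iff]
      refine ⟨hmeas_Ioo, ?_, hmeas_Ioi_c⟩
      · have : volume.restrict ({c} : Set ℝ) = 0 := by
          rw [Measure.restrict_eq_zero]
          exact measure_singleton c
        rw [this]
        exact aestronglyMeasurable_zero_measure _
    · -- E empty : u = P on Ioi 0
      rw [not_nonempty_iff_eq_empty] at hne
      refine hP_int.aestronglyMeasurable.congr ?_
      filter_upwards [ae_restrict_mem measurableSet_Ioi] with t ht
      refine (hfake t ht ?_).symm
      rw [hne]
      exact notMem_empty t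



-- translation pull helper
lemma ae_shift_pull {pred : ℝ → Prop} (hpred : ∀ᵐ τ ∂(volume.restrict (Ioi (0:ℝ))), pred τ)
    (s : ℝ) : ∀ᵐ t ∂(volume : Measure ℝ), 0 < t - s → pred (t - s) := by
  rw [ae_restrict_iff' measurableSet_Ioi] at hpred
  rw [ae_iff] at hpred ⊢
  have hq : Measure.QuasiMeasurePreserving (fun t : ℝ => t - s) volume volume :=
    (measurePreserving_sub_right volume s).quasiMeasurePreserving
  refine measure_mono_null ?_ (hq.preimage_null hpred)
  intro t ht
  simp only [mem_setOf_eq, mem_preimage, not_forall, mem_Ioi] at ht ⊢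
  exact ht

lemma ioo_iUnion (c : ℝ) (hc : 0 ≤ c) :
    Ioo (0:ℝ) c = ⋃ n : ℕ, Ioc (0:ℝ) (c - c / (n + 2)) := by
  rcases eq_or_lt_of_le hc with h0 | hpos
  · rw [← h0]
    simp only [Ioo_self]
    ext x
    simp only [mem_empty_iff_false, mem_iUnion, mem_Ioc, false_iff, not_exists, not_and]
    intro n hx
    rw [zero_sub]
    intro hle
    have : (0:ℝ) ≤ 0 / ((n:ℝ)+2) := by norm_num
    have h2 : -(0 / ((n:ℝ)+2)) ≤ 0 := by norm_num
    linarith [hle.trans h2]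
  · ext x
    simp only [mem_Ioo, mem_iUnion, mem_Ioc]
    constructor
    · rintro ⟨hx0, hxc⟩
      obtain ⟨n, hn⟩ := exists_nat_ge (c / (c - x))
      refine ⟨n, hx0, ?_⟩
      have hcx : 0 < c - x := by linarith
      rw [div_le_iff₀ hcx] at hn
      have hposn : (0:ℝ) < (n:ℝ) + 2 := by positivity
      have hdiv : c / ((n:ℝ) + 2) ≤ c - x := by
        rw [div_le_iff₀ hposn]
        nlinarith
      linarith
    · rintro ⟨n, hx0, hxle⟩
      have : 0 < c / ((n:ℝ) + 2) := by positivity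
      exact ⟨hx0, by linarith⟩

lemma coreB' (P u : ℝ → ℝ) (β : ℝ) (hβ : 0 < β)
    (hP_int : IntegrableOn P (Ioi 0) volume)
    (hP_pos : ∀ τ : ℝ, 0 < τ → 0 < P τ)
    (hu_nonneg : ∀ t, 0 ≤ u t)
    (hu_eq : ∀ t : ℝ, 0 ≤ t → u t = P t + β * ∫ s in (0:ℝ)..t, P (t - s) * u s)
    (hβK : β * ∫ t in Ioi (0:ℝ), P t < 1) :
    IntegrableOn u (Ioi 0) volume := by
  have humeas : AEStronglyMeasurable u (volume.restrict (Ioi 0)) :=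
    coreA P u β hP_int hP_pos hu_eq
  -- measurable representatives
  set P' : ℝ → ℝ := hP_int.aestronglyMeasurable.mk P with hP'def
  set Pd : ℝ → ℝ := (Ioi (0:ℝ)).indicator P' with hPddef
  have hPd_meas : Measurable Pd :=
    (hP_int.aestronglyMeasurable.stronglyMeasurable_mk.measurable).indicator measurableSet_Ioi
  have hPP : ∀ᵐ τ ∂(volume.restrict (Ioi (0:ℝ))), P τ = Pd τ := by
    filter_upwards [hP_int.aestronglyMeasurable.ae_eq_mk, ae_restrict_mem measurableSet_Ioi]
      with τ h1 h2
    rw [hPddef, indicator_of_mem h2]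
    exact h1
  set u' : ℝ → ℝ := humeas.mk u with hu'def
  set ud : ℝ → ℝ := (Ioi (0:ℝ)).indicator u' with huddef
  have hud_meas : Measurable ud :=
    (humeas.stronglyMeasurable_mk.measurable).indicator measurableSet_Ioi
  have hUU : ∀ᵐ s ∂(volume.restrict (Ioi (0:ℝ))), u s = ud s := by
    filter_upwards [humeas.ae_eq_mk, ae_restrict_mem measurableSet_Ioi] with s h1 h2
    rw [huddef, indicator_of_mem h2]
    exact h1
  set Ph : ℝ → ℝ≥0∞ := fun τ => ENNReal.ofReal (Pd τ) with hPhdef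
  have hPh_meas : Measurable Ph := ENNReal.measurable_ofReal.comp hPd_meas
  set g : ℝ → ℝ≥0∞ := fun s => ENNReal.ofReal (ud s) with hgdef
  have hg_meas : Measurable g := ENNReal.measurable_ofReal.comp hud_meas
  have hg_ne_top : ∀ s, g s ≠ ⊤ := fun s => ENNReal.ofReal_ne_top
  set K : ℝ := ∫ t in Ioi (0:ℝ), P t with hKdef
  have hP_nonneg_ae : 0 ≤ᵐ[volume.restrict (Ioi (0:ℝ))] P := by
    filter_upwards [ae_restrict_mem measurableSet_Ioi] with τ hτ
    exact (hP_pos τ hτ).le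
  set Kh : ℝ≥0∞ := ∫⁻ τ in Ioi (0:ℝ), Ph τ with hKhdef
  have hKh : Kh = ENNReal.ofReal K := by
    rw [hKhdef, hKdef, ofReal_integral_eq_lintegral_ofReal hP_int hP_nonneg_ae]
    exact (lintegral_congr_ae (hPP.mono fun τ h => by rw [h])).symm
  have hKh_ne : Kh ≠ ⊤ := by rw [hKh]; exact ENNReal.ofReal_ne_top
  set θ : ℝ≥0∞ := ENNReal.ofReal β * Kh with hθdef
  have hθ1 : θ < 1 := by
    rw [hθdef, hKh, ← ENNReal.ofReal_mul hβ.le]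
    exact ENNReal.ofReal_lt_one.2 hβK
  set conv : ℝ → ℝ≥0∞ := fun t => ∫⁻ s in Ioc 0 t, Ph (t - s) * g s with hconvdef
  have hFmeas : Measurable (Function.uncurry fun t s : ℝ => Ph (t - s) * g s) :=
    ((hPh_meas.comp (measurable_fst.sub measurable_snd)).mul (hg_meas.comp measurable_snd))
  have hFq_meas : Measurable (fun q : ℝ × ℝ =>
      if 0 < q.2 ∧ q.2 ≤ q.1 then Ph (q.1 - q.2) * g q.2 else 0) := by
    refine Measurable.ite ?_ hFmeas measurable_const
    exact ((measurableSet_lt measurable_const measurable_snd).inter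
      (measurableSet_le measurable_snd measurable_fst))
  have hconv_eq : ∀ t : ℝ, conv t = ∫⁻ s, (fun q : ℝ × ℝ =>
      if 0 < q.2 ∧ q.2 ≤ q.1 then Ph (q.1 - q.2) * g q.2 else 0) (t, s) := by
    intro t
    show (∫⁻ s in Ioc 0 t, Ph (t - s) * g s) = _
    rw [← lintegral_indicator measurableSet_Ioc]
    refine lintegral_congr fun s => ?_
    by_cases hs : s ∈ Ioc 0 t
    · rw [indicator_of_mem hs]
      simp only [mem_Ioc] at hs
      exact (if_pos hs).symm
    · rw [indicator_of_notMem hs]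
      simp only [mem_Ioc] at hs
      exact (if_neg hs).symm
  have hconv_meas : Measurable conv := by
    have h1 : conv = fun t => ∫⁻ s, (fun q : ℝ × ℝ =>
        if 0 < q.2 ∧ q.2 ≤ q.1 then Ph (q.1 - q.2) * g q.2 else 0) (t, s) := funext hconv_eq
    rw [h1]
    exact Measurable.lintegral_prod_right' hFq_meas
  -- pointwise identification on Ioc 0 t
  have hu_ae_Ioc : ∀ t : ℝ, u =ᵐ[volume.restrict (Ioc 0 t)] ud :=
    fun t => ae_restrict_of_ae_restrict_of_subset Ioc_subset_Ioi_self hUU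
  have hB1 : ∀ t : ℝ, 0 < t → (fun s => ENNReal.ofReal (P (t - s) * u s))
      =ᵐ[volume.restrict (Ioc 0 t)] fun s => Ph (t - s) * g s := by
    intro t ht
    have hker := ae_restrict_of_ae (μ := volume) (s := Ioc 0 t) (ae_sub_pull hPP t)
    have hne : ∀ᵐ s ∂(volume.restrict (Ioc 0 t)), s ≠ t := by
      refine ae_restrict_of_ae ?_
      rw [ae_iff]
      have : {s : ℝ | ¬ s ≠ t} = {t} := by ext s; simp
      rw [this]; exact measure_singleton t
    filter_upwards [hker, hu_ae_Ioc t, ae_restrict_mem measurableSet_Ioc, hne]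
      with s h1 h2 h3 h4
    have hst : s < t := lt_of_le_of_ne h3.2 h4
    have hts : 0 < t - s := by linarith
    rw [ENNReal.ofReal_mul (hP_pos _ hts).le, h1 hts, h2]
  have hnn : ∀ t : ℝ, 0 < t → 0 ≤ᵐ[volume.restrict (Ioc 0 t)] fun s => P (t - s) * u s := by
    intro t ht
    have hne : ∀ᵐ s ∂(volume.restrict (Ioc 0 t)), s ≠ t := by
      refine ae_restrict_of_ae ?_
      rw [ae_iff]
      have : {s : ℝ | ¬ s ≠ t} = {t} := by ext s; simp
      rw [this]; exact measure_singleton t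
    filter_upwards [ae_restrict_mem measurableSet_Ioc, hne] with s h3 h4
    have hst : s < t := lt_of_le_of_ne h3.2 h4
    exact mul_nonneg (hP_pos _ (by linarith)).le (hu_nonneg s)
  have henorm : ∀ t : ℝ, 0 < t →
      ∫⁻ s in Ioc 0 t, ‖P (t - s) * u s‖ₑ = conv t := by
    intro t ht
    refine Eq.trans (lintegral_congr_ae ?_) (lintegral_congr_ae (hB1 t ht))
    filter_upwards [hnn t ht] with s hs
    exact Real.enorm_eq_ofReal hs
  have hAESMint : ∀ t : ℝ, 0 < t →
      AEStronglyMeasurable (fun s => P (t - s) * u s) (volume.restrict (Ioc 0 t)) := by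
    intro t ht
    have h1 : AEStronglyMeasurable (fun s : ℝ => P (t - s)) (volume.restrict (Ioc 0 t)) :=
      aestronglyMeasurable_iff_aemeasurable.2
        ((hP_int.aestronglyMeasurable.aemeasurable).comp_quasiMeasurePreserving (qmp_refl t))
    exact h1.mul (humeas.mono_set Ioc_subset_Ioi_self)
  have hgen : ∀ t : ℝ, 0 < t → conv t ≠ ⊤ →
      ENNReal.ofReal (u t) = ENNReal.ofReal (P t) + ENNReal.ofReal β * conv t := by
    intro t ht hc
    have hII : IntegrableOn (fun s => P (t - s) * u s) (Ioc 0 t) volume := by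
      refine ⟨hAESMint t ht, ?_⟩
      rw [hasFiniteIntegral_def, lt_top_iff_ne_top, henorm t ht]
      exact hc
    have hII' : IntervalIntegrable (fun s => P (t - s) * u s) volume 0 t :=
      (intervalIntegrable_iff_integrableOn_Ioc_of_le ht.le).2 hII
    have hJset : (∫ s in (0:ℝ)..t, P (t - s) * u s) = ∫ s in Ioc 0 t, P (t - s) * u s := by
      rw [intervalIntegral.integral_of_le ht.le]
    have hJof : ENNReal.ofReal (∫ s in Ioc 0 t, P (t - s) * u s) = conv t := by
      rw [ofReal_integral_eq_lintegral_ofReal hII (hnn t ht)]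
      exact lintegral_congr_ae (hB1 t ht)
    have hJnn : 0 ≤ ∫ s in Ioc 0 t, P (t - s) * u s :=
      integral_nonneg_of_ae (hnn t ht)
    rw [hu_eq t ht.le, hJset]
    rw [ENNReal.ofReal_add (hP_pos t ht).le (mul_nonneg hβ.le hJnn),
      ENNReal.ofReal_mul hβ.le, hJof]
  have hfake : ∀ t : ℝ, 0 < t → conv t = ⊤ → u t = P t := by
    intro t ht hc
    have hnii : ¬ IntervalIntegrable (fun s => P (t - s) * u s) volume 0 t := by
      intro hii
      have := ((intervalIntegrable_iff_integrableOn_Ioc_of_le ht.le).1 hii).2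
      rw [hasFiniteIntegral_def, henorm t ht, hc] at this
      exact absurd this (lt_irrefl ⊤)
    rw [hu_eq t ht.le, intervalIntegral.integral_undef hnii, mul_zero, add_zero]
  have hub : ∀ t : ℝ, 0 < t →
      ENNReal.ofReal (u t) ≤ ENNReal.ofReal (P t) + ENNReal.ofReal β * conv t := by
    intro t ht
    by_cases hc : conv t = ⊤
    · rw [hfake t ht hc]
      exact le_add_right le_rfl
    · exact (hgen t ht hc).le
  -- mass function
  set w : ℝ → ℝ≥0∞ := fun T => ∫⁻ s in Ioc 0 T, g s with hwdef
  have hw_mono : ∀ S T : ℝ, S ≤ T → w S ≤ w T := by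
    intro S T hST
    exact lintegral_mono_set (Ioc_subset_Ioc_right hST)
  have hw_ofu : ∀ T : ℝ, w T = ∫⁻ s in Ioc 0 T, ENNReal.ofReal (u s) := by
    intro T
    refine (lintegral_congr_ae ?_).symm
    filter_upwards [hu_ae_Ioc T] with s hs
    rw [hs]
  -- Tonelli bound for the convolution integral
  have hconvT : ∀ T : ℝ, ∫⁻ t in Ioc 0 T, conv t ≤ Kh * w T := by
    intro T
    set gT : ℝ → ℝ≥0∞ := (Ioc (0:ℝ) T).indicator g with hgTdef
    have hgT_meas : Measurable gT := hg_meas.indicator measurableSet_Ioc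
    have hgT_ne : ∀ s, gT s ≠ ⊤ := by
      intro s
      rw [hgTdef]
      by_cases hs : s ∈ Ioc (0:ℝ) T
      · rw [indicator_of_mem hs]; exact hg_ne_top s
      · rw [indicator_of_notMem hs]; exact ENNReal.zero_ne_top
    have h1 : ∀ t ∈ Ioc (0:ℝ) T, conv t = ∫⁻ s in Ioc 0 t, Ph (t - s) * gT s := by
      intro t ht
      refine setLIntegral_congr_fun_ae measurableSet_Ioc (ae_of_all _ fun s hs => ?_)
      rw [hgTdef, indicator_of_mem (mem_Ioc.2 ⟨hs.1, hs.2.trans ht.2⟩)]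
    have h2 : ∫⁻ t in Ioc 0 T, conv t = ∫⁻ t in Ioc 0 T,
        ∫⁻ s in Ioc 0 t, Ph (t - s) * gT s := by
      exact setLIntegral_congr_fun_ae measurableSet_Ioc (ae_of_all _ h1)
    rw [h2]
    have h3 : (∫⁻ t in Ioc 0 T, ∫⁻ s in Ioc 0 t, Ph (t - s) * gT s)
        ≤ ∫⁻ t in Ioi 0, ∫⁻ s in Ioc 0 t, Ph (t - s) * gT s :=
      lintegral_mono_set Ioc_subset_Ioi_self
    have hswap : (∫⁻ t in Ioi (0:ℝ), ∫⁻ s in Ioc 0 t, Ph (t - s) * gT s)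
        = ∫⁻ s in Ioi (0:ℝ), ∫⁻ t in Ioi s, Ph (t - s) * gT s :=
      swap_Ioi (fun t s => Ph (t - s) * gT s)
        ((hPh_meas.comp (measurable_fst.sub measurable_snd)).mul (hgT_meas.comp measurable_snd))
    have h4 : ∀ s : ℝ, (∫⁻ t in Ioi s, Ph (t - s) * gT s) = gT s * Kh := by
      intro s
      have : (∫⁻ t in Ioi s, Ph (t - s) * gT s) = ∫⁻ t in Ioi s, gT s * Ph (t - s) := by
        refine lintegral_congr fun t => mul_comm _ _
      rw [this, lintegral_const_mul' (gT s) _ (hgT_ne s), tail_eq Ph hPh_meas s]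
    have h5 : (∫⁻ s in Ioi (0:ℝ), gT s * Kh) = Kh * w T := by
      have e1 : (∫⁻ s in Ioi (0:ℝ), gT s * Kh) = ∫⁻ s in Ioi (0:ℝ), Kh * gT s := by
        refine lintegral_congr fun s => mul_comm _ _
      rw [e1, lintegral_const_mul' Kh _ hKh_ne]
      congr 1
      rw [hgTdef, lintegral_indicator measurableSet_Ioc, Measure.restrict_restrict measurableSet_Ioc]
      rw [inter_eq_self_of_subset_left Ioc_subset_Ioi_self]
    calc (∫⁻ t in Ioc 0 T, ∫⁻ s in Ioc 0 t, Ph (t - s) * gT s)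
        ≤ ∫⁻ t in Ioi 0, ∫⁻ s in Ioc 0 t, Ph (t - s) * gT s := h3
      _ = ∫⁻ s in Ioi (0:ℝ), ∫⁻ t in Ioi s, Ph (t - s) * gT s := hswap
      _ = ∫⁻ s in Ioi (0:ℝ), gT s * Kh := lintegral_congr fun s => h4 s
      _ = Kh * w T := h5
  -- uniform bound whenever finite
  set C0 : ℝ≥0∞ := Kh * (1 - θ)⁻¹ with hC0def
  have hC0_ne : C0 ≠ ⊤ := by
    refine ENNReal.mul_ne_top hKh_ne (ENNReal.inv_ne_top.2 ?_)
    intro h0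
    exact absurd (tsub_eq_zero_iff_le.1 h0) (not_le.2 hθ1)
  have hbound : ∀ T : ℝ, w T ≠ ⊤ → w T ≤ C0 := by
    intro T hwT
    by_cases hT : 0 < T
    case neg =>
      have : Ioc (0:ℝ) T = ∅ := Ioc_eq_empty (by intro hlt; exact hT hlt)
      rw [hwdef]
      simp only [this]
      simp
    case pos =>
      have hP_ae_Ioc : ∀ᵐ t ∂(volume.restrict (Ioc (0:ℝ) T)), P t = Pd t :=
        ae_restrict_of_ae_restrict_of_subset Ioc_subset_Ioi_self hPP
      have hstep : w T ≤ Kh + θ * w T := by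
        have h1 : w T ≤ ∫⁻ t in Ioc 0 T,
            (ENNReal.ofReal (P t) + ENNReal.ofReal β * conv t) := by
          rw [hw_ofu T]
          refine lintegral_mono_ae ?_
          filter_upwards [ae_restrict_mem measurableSet_Ioc] with t htm
          exact hub t htm.1
        have h2 : (∫⁻ t in Ioc 0 T, (ENNReal.ofReal (P t) + ENNReal.ofReal β * conv t))
            = (∫⁻ t in Ioc 0 T, ENNReal.ofReal (P t))
              + ∫⁻ t in Ioc 0 T, ENNReal.ofReal β * conv t := by
          exact lintegral_add_right _ (hconv_meas.const_mul _)
        have h3 : (∫⁻ t in Ioc 0 T, ENNReal.ofReal (P t)) ≤ Kh := by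
          have e1 : (∫⁻ t in Ioc 0 T, ENNReal.ofReal (P t)) = ∫⁻ t in Ioc 0 T, Ph t := by
            refine lintegral_congr_ae ?_
            filter_upwards [hP_ae_Ioc] with t ht
            rw [ht]
          rw [e1, hKhdef]
          exact lintegral_mono_set Ioc_subset_Ioi_self
        have h4 : (∫⁻ t in Ioc 0 T, ENNReal.ofReal β * conv t)
            = ENNReal.ofReal β * ∫⁻ t in Ioc 0 T, conv t :=
          lintegral_const_mul' _ _ ENNReal.ofReal_ne_top
        have h5 : ENNReal.ofReal β * (∫⁻ t in Ioc 0 T, conv t) ≤ θ * w T := by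
          rw [hθdef, mul_assoc]
          exact mul_le_mul_right (hconvT T) _
        calc w T ≤ _ := h1
          _ = _ := h2
          _ ≤ Kh + θ * w T := add_le_add h3 ((le_of_eq h4).trans h5)
      exact enn_solve hwT hθ1 hstep
  -- no blow-up
  have hwfin : ∀ T : ℝ, w T ≠ ⊤ := by
    by_contra hex
    push_neg at hex
    obtain ⟨T₁, hT₁⟩ := hex
    set S : Set ℝ := {T | w T = ⊤} with hSdef
    have hSne : S.Nonempty := ⟨T₁, hT₁⟩
    have hSpos : ∀ T ∈ S, (0:ℝ) ≤ T := by
      intro T hT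
      by_contra hneg
      push_neg at hneg
      have : Ioc (0:ℝ) T = ∅ := Ioc_eq_empty (by intro hlt; linarith)
      have hw0 : w T = 0 := by rw [hwdef]; simp [this]
      rw [hSdef] at hT
      simp only [mem_setOf_eq] at hT
      rw [hT] at hw0
      exact ENNReal.top_ne_zero hw0
    have hbddS : BddBelow S := ⟨0, hSpos⟩
    set Ts : ℝ := sInf S with hTsdef
    have hTs0 : 0 ≤ Ts := le_csInf hSne hSpos
    have hlt : ∀ T : ℝ, T < Ts → w T ≠ ⊤ := by
      intro T hT hwT
      exact absurd (csInf_le hbddS (by rw [hSdef]; exact hwT)) (not_le.2 hT)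
    have hup : ∀ ε : ℝ, 0 < ε → w (Ts + ε) = ⊤ := by
      intro ε hε
      obtain ⟨T', hT'S, hT'lt⟩ := (csInf_lt_iff hbddS hSne).1
        (by rw [← hTsdef]; linarith : sInf S < Ts + ε)
      rw [hSdef] at hT'S
      simp only [mem_setOf_eq] at hT'S
      exact top_le_iff.1 (hT'S ▸ hw_mono T' (Ts + ε) hT'lt.le)
    -- w Ts is finite and bounded
    have hwTs_le : w Ts ≤ C0 := by
      rcases eq_or_lt_of_le hTs0 with h0 | hTs_pos
      · have : Ioc (0:ℝ) Ts = ∅ := by rw [← h0]; exact Ioc_self (0:ℝ)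
        rw [hwdef]
        simp only [this]
        simp
      · have hcov : Ioo (0:ℝ) Ts = ⋃ n : ℕ, Ioc (0:ℝ) (Ts - Ts / (n + 2)) :=
          ioo_iUnion Ts hTs0
        have hw_Ioo : w Ts = ∫⁻ s in Ioo 0 Ts, g s := by
          rw [hwdef]
          rw [restrict_Ioo_eq_restrict_Ioc]
        have hρ : ∀ A : Set ℝ, MeasurableSet A →
            (volume.withDensity g) A = ∫⁻ s in A, g s :=
          fun A hA => withDensity_apply g hA
        have hmono : Monotone (fun n : ℕ => Ioc (0:ℝ) (Ts - Ts / (n + 2))) := by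
          intro a b hab
          refine Ioc_subset_Ioc_right (sub_le_sub_left ?_ Ts)
          have h2 : ((a:ℝ) + 2) ≤ ((b:ℝ) + 2) := by
            have : (a:ℝ) ≤ (b:ℝ) := Nat.cast_le.2 hab
            linarith
          exact div_le_div_of_nonneg_left hTs_pos.le (by positivity) h2
        have hdir : Directed (fun x1 x2 : Set ℝ => x1 ⊆ x2)
            (fun n : ℕ => Ioc (0:ℝ) (Ts - Ts / (n + 2))) := hmono.directed_le
        have : w Ts = ⨆ n : ℕ, w (Ts - Ts / (n + 2)) := by
          rw [hw_Ioo, ← hρ _ measurableSet_Ioo, hcov, hdir.measure_iUnion]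
          refine iSup_congr fun n => ?_
          rw [hρ _ measurableSet_Ioc, hwdef]
        rw [this]
        refine iSup_le fun n => ?_
        have hlt' : Ts - Ts / (n + 2) < Ts := by
          have : 0 < Ts / ((n:ℝ) + 2) := by positivity
          linarith
        exact hbound _ (hlt _ hlt')
    have hwTs_ne : w Ts ≠ ⊤ := ne_top_of_le_ne_top hC0_ne hwTs_le
    -- infinite mass just above Ts
    have hmass : ∀ ε : ℝ, 0 < ε → ∫⁻ s in Ioc Ts (Ts + ε), g s = ⊤ := by
      intro ε hε
      have hdisj : Disjoint (Ioc (0:ℝ) Ts) (Ioc Ts (Ts + ε)) := by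
        rw [Set.disjoint_left]
        rintro x ⟨_, hx1⟩ ⟨hx2, _⟩
        exact absurd hx2 (not_lt.2 hx1)
      have hunion : Ioc (0:ℝ) (Ts + ε) = Ioc (0:ℝ) Ts ∪ Ioc Ts (Ts + ε) :=
        (Ioc_union_Ioc_eq_Ioc hTs0 (by linarith)).symm
      have hsum : w (Ts + ε) = w Ts + ∫⁻ s in Ioc Ts (Ts + ε), g s := by
        rw [hwdef]
        simp only []
        rw [hunion, lintegral_union measurableSet_Ioc hdisj]
      by_contra hne2
      have : w (Ts + ε) ≠ ⊤ := by
        rw [hsum]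
        exact ENNReal.add_ne_top.2 ⟨hwTs_ne, hne2⟩
      exact this (hup ε hε)
    -- the genuine set has positive measure in every window above Ts
    have hGen_meas : MeasurableSet {t : ℝ | conv t ≠ ⊤} := by
      have he : {t : ℝ | conv t ≠ ⊤} = conv ⁻¹' ({⊤}ᶜ) := rfl
      rw [he]
      exact hconv_meas (measurableSet_singleton ⊤).compl
    have hwin_sub : ∀ δ : ℝ, 0 < δ → Ioc Ts (Ts + δ) ⊆ Ioi (0:ℝ) := by
      intro δ hδ t ht
      exact lt_of_le_of_lt hTs0 ht.1
    have hgenpos : ∀ δ : ℝ, 0 < δ →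
        0 < volume ({t : ℝ | conv t ≠ ⊤} ∩ Ioc Ts (Ts + δ)) := by
      intro δ hδ
      by_contra hzc
      push_neg at hzc
      rw [le_zero_iff] at hzc
      have hae : ∀ᵐ t ∂(volume.restrict (Ioc Ts (Ts + δ))), conv t = ⊤ := by
        rw [ae_restrict_iff' measurableSet_Ioc, ae_iff]
        refine measure_mono_null ?_ hzc
        intro t ht
        simp only [mem_setOf_eq, not_forall] at ht
        obtain ⟨ht1, ht2⟩ := ht
        exact ⟨ht2, ht1⟩
      have h1 : ∫⁻ t in Ioc Ts (Ts + δ), g t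
          = ∫⁻ t in Ioc Ts (Ts + δ), ENNReal.ofReal (P t) := by
        refine lintegral_congr_ae ?_
        filter_upwards [hae, ae_restrict_mem measurableSet_Ioc,
          ae_restrict_of_ae_restrict_of_subset (hwin_sub δ hδ) hUU] with t h2 h3 h4
        have hft : u t = P t := hfake t (lt_of_le_of_lt hTs0 h3.1) h2
        show ENNReal.ofReal (ud t) = ENNReal.ofReal (P t)
        rw [← h4, hft]
      have h2 : (∫⁻ t in Ioc Ts (Ts + δ), ENNReal.ofReal (P t)) ≤ Kh := by
        have e1 : (∫⁻ t in Ioc Ts (Ts + δ), ENNReal.ofReal (P t))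
            = ∫⁻ t in Ioc Ts (Ts + δ), Ph t := by
          refine lintegral_congr_ae ?_
          filter_upwards [ae_restrict_of_ae_restrict_of_subset (hwin_sub δ hδ) hPP] with t ht
          rw [ht]
        rw [e1, hKhdef]
        exact lintegral_mono_set (hwin_sub δ hδ)
      rw [hmass δ hδ] at h1
      rw [← h1] at h2
      exact hKh_ne (top_le_iff.1 h2)
    -- choose a sub-window at positive distance
    have hσex : ∃ n : ℕ, 0 < volume
        ({t : ℝ | conv t ≠ ⊤} ∩ Ioc (Ts + 1 / (n + 2)) (Ts + 1)) := by
      by_contra hall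
      push_neg at hall
      have hall' : ∀ n : ℕ, volume ({t : ℝ | conv t ≠ ⊤} ∩ Ioc (Ts + 1 / (n + 2)) (Ts + 1)) = 0 :=
        fun n => le_antisymm (hall n) zero_le
      have hcup : {t : ℝ | conv t ≠ ⊤} ∩ Ioc Ts (Ts + 1)
          = ⋃ n : ℕ, ({t : ℝ | conv t ≠ ⊤} ∩ Ioc (Ts + 1 / (n + 2)) (Ts + 1)) := by
        ext t
        simp only [mem_inter_iff, mem_iUnion, mem_Ioc, mem_setOf_eq]
        constructor
        · rintro ⟨h1, h2, h3⟩
          obtain ⟨n, hn⟩ := exists_nat_one_div_lt (show (0:ℝ) < t - Ts by linarith)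
          refine ⟨n, h1, ?_, h3⟩
          have : (1:ℝ) / (n + 2) ≤ 1 / (n + 1) := by
            refine div_le_div_of_nonneg_left (by norm_num) (by positivity) (by push_cast; linarith)
          linarith
        · rintro ⟨n, h1, h2, h3⟩
          have : (0:ℝ) < 1 / ((n:ℝ) + 2) := by positivity
          exact ⟨h1, by linarith, h3⟩
      have := hgenpos 1 one_pos
      rw [hcup] at this
      have hz : volume (⋃ n : ℕ, ({t : ℝ | conv t ≠ ⊤} ∩ Ioc (Ts + 1 / (n + 2)) (Ts + 1))) = 0 := by
        exact measure_iUnion_null fun n => hall' n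
      rw [hz] at this
      exact lt_irrefl 0 this
    obtain ⟨nσ, hnσ⟩ := hσex
    set σ : ℝ := 1 / (nσ + 2) with hσdef
    have hσpos : 0 < σ := by rw [hσdef]; positivity
    -- select bounded-u part
    have hNex : ∃ N : ℕ, 0 < volume
        ({t : ℝ | conv t ≠ ⊤} ∩ Ioc (Ts + σ) (Ts + 1) ∩ {t : ℝ | ud t ≤ N}) := by
      by_contra hall
      push_neg at hall
      have hall' : ∀ N : ℕ, volume
          ({t : ℝ | conv t ≠ ⊤} ∩ Ioc (Ts + σ) (Ts + 1) ∩ {t : ℝ | ud t ≤ N}) = 0 :=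
        fun N => le_antisymm (hall N) zero_le
      have hcup : {t : ℝ | conv t ≠ ⊤} ∩ Ioc (Ts + σ) (Ts + 1)
          = ⋃ N : ℕ, ({t : ℝ | conv t ≠ ⊤} ∩ Ioc (Ts + σ) (Ts + 1) ∩ {t : ℝ | ud t ≤ N}) := by
        ext t
        simp only [mem_inter_iff, mem_iUnion, mem_setOf_eq]
        constructor
        · rintro ⟨h1, h2⟩
          obtain ⟨N, hN⟩ := exists_nat_ge (ud t)
          exact ⟨N, ⟨h1, h2⟩, hN⟩
        · rintro ⟨N, ⟨h1, h2⟩, _⟩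
          exact ⟨h1, h2⟩
      rw [hcup] at hnσ
      have hz : volume (⋃ N : ℕ, ({t : ℝ | conv t ≠ ⊤} ∩ Ioc (Ts + σ) (Ts + 1)
          ∩ {t : ℝ | ud t ≤ N})) = 0 := measure_iUnion_null fun N => hall' N
      rw [hz] at hnσ
      exact lt_irrefl 0 hnσ
    obtain ⟨N, hNpos⟩ := hNex
    set A : Set ℝ := {t : ℝ | conv t ≠ ⊤} ∩ Ioc (Ts + σ) (Ts + 1) ∩ {t : ℝ | ud t ≤ N}
      with hAdef
    have hA_meas : MeasurableSet A := by
      refine (hGen_meas.inter measurableSet_Ioc).inter ?_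
      exact measurableSet_le hud_meas measurable_const
    have hA_sub : A ⊆ Ioi (0:ℝ) := by
      intro t ht
      rw [hAdef] at ht
      have := ht.1.2.1
      have : Ts + σ < t := this
      simp only [mem_Ioi]
      linarith
    have hA_lt : ∀ t ∈ A, Ts + σ < t := fun t ht => ht.1.2.1
    have hA_vol : volume A < ⊤ := by
      refine lt_of_le_of_lt (measure_mono (fun t ht => ht.1.2)) ?_
      rw [Real.volume_Ioc]
      exact ENNReal.ofReal_lt_top
    have hgA_fin : ∫⁻ t in A, g t ≠ ⊤ := by
      have h1 : ∫⁻ t in A, g t ≤ ∫⁻ _ in A, (N : ℝ≥0∞) := by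
        refine setLIntegral_mono measurable_const fun t ht => ?_
        rw [hgdef]
        calc ENNReal.ofReal (ud t) ≤ ENNReal.ofReal (N:ℝ) := ENNReal.ofReal_le_ofReal ht.2
          _ = (N : ℝ≥0∞) := ENNReal.ofReal_natCast N
      rw [setLIntegral_const] at h1
      exact (lt_of_le_of_lt h1 (ENNReal.mul_lt_top (ENNReal.natCast_lt_top N) hA_vol)).ne
    -- the mass window
    set M : Set ℝ := Ioc Ts (Ts + σ / 2) with hMdef
    have hmassM : ∫⁻ s in M, g s = ⊤ := hmass (σ / 2) (by positivity)
    have hMsub : ∀ t ∈ A, M ⊆ Ioc 0 t := by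
      intro t ht s hs
      rw [hMdef] at hs
      refine ⟨lt_of_le_of_lt hTs0 hs.1, ?_⟩
      have := hA_lt t ht
      have h2 : s ≤ Ts + σ / 2 := hs.2
      linarith
    -- lower bound: mass in A dominates the convolution over M
    have step1 : ENNReal.ofReal β * (∫⁻ t in A, ∫⁻ s in M, Ph (t - s) * g s)
        ≤ ∫⁻ t in A, g t := by
      rw [← lintegral_const_mul' _ _ ENNReal.ofReal_ne_top]
      refine lintegral_mono_ae ?_
      filter_upwards [ae_restrict_mem hA_meas,
        ae_restrict_of_ae_restrict_of_subset hA_sub hUU] with t htA htu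
      have ht0 : 0 < t := hA_sub htA
      have hgt : g t = ENNReal.ofReal (u t) := by
        show ENNReal.ofReal (ud t) = ENNReal.ofReal (u t)
        rw [htu]
      have hconv_ne : conv t ≠ ⊤ := htA.1.1
      calc ENNReal.ofReal β * ∫⁻ s in M, Ph (t - s) * g s
          ≤ ENNReal.ofReal β * conv t := by
            refine mul_le_mul_right ?_ _
            exact lintegral_mono_set (hMsub t htA)
        _ ≤ ENNReal.ofReal (P t) + ENNReal.ofReal β * conv t := le_add_self
        _ = ENNReal.ofReal (u t) := (hgen t ht0 hconv_ne).symm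
        _ = g t := hgt.symm
    have step2 : (∫⁻ t in A, ∫⁻ s in M, Ph (t - s) * g s)
        = ∫⁻ s in M, ∫⁻ t in A, Ph (t - s) * g s :=
      lintegral_lintegral_swap hFmeas.aemeasurable
    have step3 : ∀ s : ℝ, (∫⁻ t in A, Ph (t - s) * g s)
        = g s * ∫⁻ t in A, Ph (t - s) := by
      intro s
      have e1 : (∫⁻ t in A, Ph (t - s) * g s) = ∫⁻ t in A, g s * Ph (t - s) :=
        lintegral_congr fun t => mul_comm _ _
      rw [e1, lintegral_const_mul' _ _ (hg_ne_top s)]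
    -- continuity of the averaged kernel
    have hP'int : IntegrableOn P' (Ioi 0) volume :=
      hP_int.congr hP_int.aestronglyMeasurable.ae_eq_mk
    have hPd_int : Integrable Pd volume := by
      rw [hPddef]
      exact hP'int.integrable_indicator measurableSet_Ioi
    have hWAcont : Continuous fun r : ℝ => ∫ t in A, Pd (t - r) :=
      cont_translate Pd hPd_int A hA_meas hA_vol
    have hshift : ∀ s : ℝ, ∀ᵐ t ∂(volume.restrict A), 0 < t - s → P (t - s) = Pd (t - s) :=
      fun s => ae_restrict_of_ae (ae_shift_pull hPP s)
    have hker_pos : ∀ s : ℝ, s ≤ Ts + σ / 2 →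
        ∀ᵐ t ∂(volume.restrict A), 0 < Pd (t - s) := by
      intro s hs
      filter_upwards [hshift s, ae_restrict_mem hA_meas] with t h1 h2
      have hts : 0 < t - s := by
        have := hA_lt t h2
        linarith
      rw [← h1 hts]
      exact hP_pos _ hts
    have hofReal : ∀ s : ℝ, s ≤ Ts + σ / 2 →
        (∫⁻ t in A, Ph (t - s)) = ENNReal.ofReal (∫ t in A, Pd (t - s)) := by
      intro s hs
      rw [ofReal_integral_eq_lintegral_ofReal ((hPd_int.comp_sub_right s).integrableOn)
        ((hker_pos s hs).mono fun t ht => ht.le)]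
    obtain ⟨s₀, hs₀mem, hs₀min⟩ := isCompact_Icc.exists_isMinOn
      (nonempty_Icc.2 (by linarith : Ts ≤ Ts + σ / 2)) hWAcont.continuousOn
    have hApos : 0 < volume A := hNpos
    have hc_pos : 0 < ∫ t in A, Pd (t - s₀) := by
      rw [setIntegral_pos_iff_support_of_nonneg_ae
        ((hker_pos s₀ hs₀mem.2).mono fun t ht => ht.le)
        ((hPd_int.comp_sub_right s₀).integrableOn)]
      have hnull : volume (A \ Function.support fun t => Pd (t - s₀)) = 0 := by
        have h1 := (ae_restrict_iff' hA_meas).1 (hker_pos s₀ hs₀mem.2)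
        rw [ae_iff] at h1
        refine measure_mono_null ?_ h1
        intro t ht
        simp only [mem_diff, Function.mem_support, not_not] at ht
        simp only [mem_setOf_eq, not_forall]
        exact ⟨ht.1, by rw [ht.2]; exact lt_irrefl 0⟩
      have hA_eq : A = (Function.support (fun t => Pd (t - s₀)) ∩ A)
          ∪ (A \ Function.support fun t => Pd (t - s₀)) := by
        rw [inter_comm]
        exact (inter_union_diff A _).symm
      have : volume A ≤ volume (Function.support (fun t => Pd (t - s₀)) ∩ A)
          + volume (A \ Function.support fun t => Pd (t - s₀)) := by
        have hle := measure_union_le (μ := volume)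
          ((Function.support fun t => Pd (t - s₀)) ∩ A)
          (A \ Function.support fun t => Pd (t - s₀))
        rw [← hA_eq] at hle
        exact hle
      rw [hnull, add_zero] at this
      exact lt_of_lt_of_le hApos this
    have hlbWA : ∀ s ∈ M, ENNReal.ofReal (∫ t in A, Pd (t - s₀)) ≤ ∫⁻ t in A, Ph (t - s) := by
      intro s hs
      rw [hMdef] at hs
      have hsle : s ≤ Ts + σ / 2 := hs.2
      rw [hofReal s hsle]
      refine ENNReal.ofReal_le_ofReal ?_
      exact hs₀min (mem_Icc.2 ⟨hs.1.le, hsle⟩)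
    have hfinal : (∫⁻ s in M, ∫⁻ t in A, Ph (t - s) * g s) = ⊤ := by
      refine top_le_iff.1 ?_
      calc (⊤:ℝ≥0∞) = ENNReal.ofReal (∫ t in A, Pd (t - s₀)) * ⊤ := by
            rw [ENNReal.mul_top (ENNReal.ofReal_pos.2 hc_pos).ne']
        _ = ENNReal.ofReal (∫ t in A, Pd (t - s₀)) * ∫⁻ s in M, g s := by rw [hmassM]
        _ = ∫⁻ s in M, ENNReal.ofReal (∫ t in A, Pd (t - s₀)) * g s := by
            rw [lintegral_const_mul' _ _ ENNReal.ofReal_ne_top]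
        _ ≤ ∫⁻ s in M, ∫⁻ t in A, Ph (t - s) * g s := by
            refine lintegral_mono_ae ?_
            filter_upwards [ae_restrict_mem measurableSet_Ioc] with s hsM
            rw [step3 s, mul_comm (g s)]
            exact mul_le_mul_left (hlbWA s hsM) _
    have : (⊤:ℝ≥0∞) ≤ ∫⁻ t in A, g t := by
      calc (⊤:ℝ≥0∞) = ENNReal.ofReal β * ⊤ := by
            rw [ENNReal.mul_top (ENNReal.ofReal_pos.2 hβ).ne']
        _ = ENNReal.ofReal β * (∫⁻ t in A, ∫⁻ s in M, Ph (t - s) * g s) := by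
            rw [step2, hfinal]
        _ ≤ ∫⁻ t in A, g t := step1
    exact hgA_fin (top_le_iff.1 this)
  -- conclude integrability
  refine ⟨humeas, ?_⟩
  rw [hasFiniteIntegral_def]
  have he : ∫⁻ s in Ioi (0:ℝ), ‖u s‖ₑ = ∫⁻ s in Ioi (0:ℝ), g s := by
    refine lintegral_congr_ae ?_
    filter_upwards [hUU] with s h1
    rw [Real.enorm_eq_ofReal (hu_nonneg s), hgdef, h1]
  rw [he]
  have hcov : Ioi (0:ℝ) = ⋃ n : ℕ, Ioc (0:ℝ) n := by
    ext x
    simp only [mem_Ioi, mem_iUnion, mem_Ioc]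
    constructor
    · intro hx
      obtain ⟨n, hn⟩ := exists_nat_ge x
      exact ⟨n, hx, hn⟩
    · rintro ⟨n, hx, _⟩; exact hx
  have hmono : Monotone fun n : ℕ => Ioc (0:ℝ) n := by
    intro a b hab
    exact Ioc_subset_Ioc_right (Nat.cast_le.2 hab)
  have h2 : ∫⁻ s in Ioi (0:ℝ), g s = ⨆ n : ℕ, w n := by
    rw [← withDensity_apply g measurableSet_Ioi, hcov,
      hmono.directed_le.measure_iUnion]
    refine iSup_congr fun n => ?_
    rw [withDensity_apply g measurableSet_Ioc, hwdef]
  rw [h2]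
  refine lt_of_le_of_lt (iSup_le fun n => hbound n (hwfin n)) ?_
  exact lt_top_iff_ne_top.2 hC0_ne





lemma xval (Q u v : ℝ → ℝ) (β : ℝ) (hβ : 0 < β)
    (hQ_int : IntegrableOn Q (Ioi 0) volume)
    (hQ_pos : ∀ τ : ℝ, 0 < τ → 0 < Q τ)
    (humeas : AEStronglyMeasurable u (volume.restrict (Ioi 0)))
    (hu_nonneg : ∀ t, 0 ≤ u t)
    (hu_int : IntegrableOn u (Ioi 0) volume)
    (hv_nonneg : ∀ t, 0 ≤ v t)
    (hv_eq : ∀ t : ℝ, 0 ≤ t → v t = Q t + β * ∫ s in (0:ℝ)..t, Q (t - s) * u s) :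
    IntegrableOn v (Ioi 0) volume ∧
      (∫ t in Ioi 0, v t) = (∫ t in Ioi 0, Q t) * (1 + β * ∫ t in Ioi 0, u t) := by
  -- measurable representatives
  set Q' : ℝ → ℝ := hQ_int.aestronglyMeasurable.mk Q with hQ'def
  set Qd : ℝ → ℝ := (Ioi (0:ℝ)).indicator Q' with hQddef
  have hQd_meas : Measurable Qd :=
    (hQ_int.aestronglyMeasurable.stronglyMeasurable_mk.measurable).indicator measurableSet_Ioi
  have hQQ : ∀ᵐ τ ∂(volume.restrict (Ioi (0:ℝ))), Q τ = Qd τ := by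
    filter_upwards [hQ_int.aestronglyMeasurable.ae_eq_mk, ae_restrict_mem measurableSet_Ioi]
      with τ h1 h2
    rw [hQddef, indicator_of_mem h2]
    exact h1
  set u' : ℝ → ℝ := humeas.mk u with hu'def
  set ud : ℝ → ℝ := (Ioi (0:ℝ)).indicator u' with huddef
  have hud_meas : Measurable ud :=
    (humeas.stronglyMeasurable_mk.measurable).indicator measurableSet_Ioi
  have hUU : ∀ᵐ s ∂(volume.restrict (Ioi (0:ℝ))), u s = ud s := by
    filter_upwards [humeas.ae_eq_mk, ae_restrict_mem measurableSet_Ioi] with s h1 h2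
    rw [huddef, indicator_of_mem h2]
    exact h1
  set Qh : ℝ → ℝ≥0∞ := fun τ => ENNReal.ofReal (Qd τ) with hQhdef
  have hQh_meas : Measurable Qh := ENNReal.measurable_ofReal.comp hQd_meas
  set g : ℝ → ℝ≥0∞ := fun s => ENNReal.ofReal (ud s) with hgdef
  have hg_meas : Measurable g := ENNReal.measurable_ofReal.comp hud_meas
  have hg_ne_top : ∀ s, g s ≠ ⊤ := fun s => ENNReal.ofReal_ne_top
  set Kq : ℝ := ∫ t in Ioi (0:ℝ), Q t with hKqdef
  set Iu : ℝ := ∫ t in Ioi (0:ℝ), u t with hIudef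
  have hQ_nonneg_ae : 0 ≤ᵐ[volume.restrict (Ioi (0:ℝ))] Q := by
    filter_upwards [ae_restrict_mem measurableSet_Ioi] with τ hτ
    exact (hQ_pos τ hτ).le
  have hu_nonneg_ae : 0 ≤ᵐ[volume.restrict (Ioi (0:ℝ))] u := ae_of_all _ hu_nonneg
  have hKq_nonneg : 0 ≤ Kq := integral_nonneg_of_ae hQ_nonneg_ae
  have hIu_nonneg : 0 ≤ Iu := integral_nonneg_of_ae hu_nonneg_ae
  set Kqh : ℝ≥0∞ := ∫⁻ τ in Ioi (0:ℝ), Qh τ with hKqhdef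
  have hKqh : Kqh = ENNReal.ofReal Kq := by
    rw [hKqhdef, hKqdef, ofReal_integral_eq_lintegral_ofReal hQ_int hQ_nonneg_ae]
    exact (lintegral_congr_ae (hQQ.mono fun τ h => by rw [h])).symm
  have hKqh_ne : Kqh ≠ ⊤ := by rw [hKqh]; exact ENNReal.ofReal_ne_top
  set wu : ℝ≥0∞ := ∫⁻ s in Ioi (0:ℝ), g s with hwudef
  have hwu : wu = ENNReal.ofReal Iu := by
    rw [hwudef, hIudef, ofReal_integral_eq_lintegral_ofReal hu_int hu_nonneg_ae]
    exact (lintegral_congr_ae (hUU.mono fun s h => by rw [h])).symm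
  have hwu_ne : wu ≠ ⊤ := by rw [hwu]; exact ENNReal.ofReal_ne_top
  set conv : ℝ → ℝ≥0∞ := fun t => ∫⁻ s in Ioc 0 t, Qh (t - s) * g s with hconvdef
  have hFmeas : Measurable (Function.uncurry fun t s : ℝ => Qh (t - s) * g s) :=
    ((hQh_meas.comp (measurable_fst.sub measurable_snd)).mul (hg_meas.comp measurable_snd))
  have hFq_meas : Measurable (fun q : ℝ × ℝ =>
      if 0 < q.2 ∧ q.2 ≤ q.1 then Qh (q.1 - q.2) * g q.2 else 0) := by
    refine Measurable.ite ?_ hFmeas measurable_const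
    exact ((measurableSet_lt measurable_const measurable_snd).inter
      (measurableSet_le measurable_snd measurable_fst))
  have hconv_eq : ∀ t : ℝ, conv t = ∫⁻ s, (fun q : ℝ × ℝ =>
      if 0 < q.2 ∧ q.2 ≤ q.1 then Qh (q.1 - q.2) * g q.2 else 0) (t, s) := by
    intro t
    show (∫⁻ s in Ioc 0 t, Qh (t - s) * g s) = _
    rw [← lintegral_indicator measurableSet_Ioc]
    refine lintegral_congr fun s => ?_
    by_cases hs : s ∈ Ioc 0 t
    · rw [indicator_of_mem hs]
      simp only [mem_Ioc] at hs
      exact (if_pos hs).symm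
    · rw [indicator_of_notMem hs]
      simp only [mem_Ioc] at hs
      exact (if_neg hs).symm
  have hconv_meas : Measurable conv := by
    have h1 : conv = fun t => ∫⁻ s, (fun q : ℝ × ℝ =>
        if 0 < q.2 ∧ q.2 ≤ q.1 then Qh (q.1 - q.2) * g q.2 else 0) (t, s) := funext hconv_eq
    rw [h1]
    exact Measurable.lintegral_prod_right' hFq_meas
  have hu_ae_Ioc : ∀ t : ℝ, u =ᵐ[volume.restrict (Ioc 0 t)] ud :=
    fun t => ae_restrict_of_ae_restrict_of_subset Ioc_subset_Ioi_self hUU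
  have hB1 : ∀ t : ℝ, 0 < t → (fun s => ENNReal.ofReal (Q (t - s) * u s))
      =ᵐ[volume.restrict (Ioc 0 t)] fun s => Qh (t - s) * g s := by
    intro t ht
    have hker := ae_restrict_of_ae (μ := volume) (s := Ioc 0 t) (ae_sub_pull hQQ t)
    have hne : ∀ᵐ s ∂(volume.restrict (Ioc 0 t)), s ≠ t := by
      refine ae_restrict_of_ae ?_
      rw [ae_iff]
      have : {s : ℝ | ¬ s ≠ t} = {t} := by ext s; simp
      rw [this]; exact measure_singleton t
    filter_upwards [hker, hu_ae_Ioc t, ae_restrict_mem measurableSet_Ioc, hne]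
      with s h1 h2 h3 h4
    have hst : s < t := lt_of_le_of_ne h3.2 h4
    have hts : 0 < t - s := by linarith
    rw [ENNReal.ofReal_mul (hQ_pos _ hts).le, h1 hts, h2]
  have hnn : ∀ t : ℝ, 0 < t → 0 ≤ᵐ[volume.restrict (Ioc 0 t)] fun s => Q (t - s) * u s := by
    intro t ht
    have hne : ∀ᵐ s ∂(volume.restrict (Ioc 0 t)), s ≠ t := by
      refine ae_restrict_of_ae ?_
      rw [ae_iff]
      have : {s : ℝ | ¬ s ≠ t} = {t} := by ext s; simp
      rw [this]; exact measure_singleton t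
    filter_upwards [ae_restrict_mem measurableSet_Ioc, hne] with s h3 h4
    have hst : s < t := lt_of_le_of_ne h3.2 h4
    exact mul_nonneg (hQ_pos _ (by linarith)).le (hu_nonneg s)
  have henorm : ∀ t : ℝ, 0 < t →
      ∫⁻ s in Ioc 0 t, ‖Q (t - s) * u s‖ₑ = conv t := by
    intro t ht
    refine Eq.trans (lintegral_congr_ae ?_) (lintegral_congr_ae (hB1 t ht))
    filter_upwards [hnn t ht] with s hs
    exact Real.enorm_eq_ofReal hs
  have hAESMint : ∀ t : ℝ, 0 < t →
      AEStronglyMeasurable (fun s => Q (t - s) * u s) (volume.restrict (Ioc 0 t)) := by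
    intro t ht
    have h1 : AEStronglyMeasurable (fun s : ℝ => Q (t - s)) (volume.restrict (Ioc 0 t)) :=
      aestronglyMeasurable_iff_aemeasurable.2
        ((hQ_int.aestronglyMeasurable.aemeasurable).comp_quasiMeasurePreserving (qmp_refl t))
    exact h1.mul (humeas.mono_set Ioc_subset_Ioi_self)
  have hgen : ∀ t : ℝ, 0 < t → conv t ≠ ⊤ →
      (ENNReal.ofReal (v t) = ENNReal.ofReal (Q t) + ENNReal.ofReal β * conv t
        ∧ v t = Q t + β * (conv t).toReal) := by
    intro t ht hc
    have hII : IntegrableOn (fun s => Q (t - s) * u s) (Ioc 0 t) volume := by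
      refine ⟨hAESMint t ht, ?_⟩
      rw [hasFiniteIntegral_def, lt_top_iff_ne_top, henorm t ht]
      exact hc
    have hJset : (∫ s in (0:ℝ)..t, Q (t - s) * u s) = ∫ s in Ioc 0 t, Q (t - s) * u s := by
      rw [intervalIntegral.integral_of_le ht.le]
    have hJof : ENNReal.ofReal (∫ s in Ioc 0 t, Q (t - s) * u s) = conv t := by
      rw [ofReal_integral_eq_lintegral_ofReal hII (hnn t ht)]
      exact lintegral_congr_ae (hB1 t ht)
    have hJnn : 0 ≤ ∫ s in Ioc 0 t, Q (t - s) * u s :=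
      integral_nonneg_of_ae (hnn t ht)
    constructor
    · rw [hv_eq t ht.le, hJset]
      rw [ENNReal.ofReal_add (hQ_pos t ht).le (mul_nonneg hβ.le hJnn),
        ENNReal.ofReal_mul hβ.le, hJof]
    · rw [hv_eq t ht.le, hJset, ← hJof, ENNReal.toReal_ofReal hJnn]
  -- total lintegral of the convolution
  have htot : ∫⁻ t in Ioi (0:ℝ), conv t = Kqh * wu := by
    have hswap : (∫⁻ t in Ioi (0:ℝ), ∫⁻ s in Ioc 0 t, Qh (t - s) * g s)
        = ∫⁻ s in Ioi (0:ℝ), ∫⁻ t in Ioi s, Qh (t - s) * g s :=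
      swap_Ioi (fun t s => Qh (t - s) * g s) hFmeas
    have h4 : ∀ s : ℝ, (∫⁻ t in Ioi s, Qh (t - s) * g s) = g s * Kqh := by
      intro s
      have e1 : (∫⁻ t in Ioi s, Qh (t - s) * g s) = ∫⁻ t in Ioi s, g s * Qh (t - s) :=
        lintegral_congr fun t => mul_comm _ _
      rw [e1, lintegral_const_mul' (g s) _ (hg_ne_top s), tail_eq Qh hQh_meas s]
    have h5 : (∫⁻ s in Ioi (0:ℝ), g s * Kqh) = Kqh * wu := by
      have e1 : (∫⁻ s in Ioi (0:ℝ), g s * Kqh) = ∫⁻ s in Ioi (0:ℝ), Kqh * g s :=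
        lintegral_congr fun s => mul_comm _ _
      rw [e1, lintegral_const_mul' Kqh _ hKqh_ne]
    calc (∫⁻ t in Ioi (0:ℝ), conv t)
        = ∫⁻ s in Ioi (0:ℝ), ∫⁻ t in Ioi s, Qh (t - s) * g s := hswap
      _ = ∫⁻ s in Ioi (0:ℝ), g s * Kqh := lintegral_congr fun s => h4 s
      _ = Kqh * wu := h5
  have htot_ne : (∫⁻ t in Ioi (0:ℝ), conv t) ≠ ⊤ := by
    rw [htot]
    exact ENNReal.mul_ne_top hKqh_ne hwu_ne
  have hae_fin : ∀ᵐ t ∂(volume.restrict (Ioi (0:ℝ))), conv t ≠ ⊤ :=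
    (ae_lt_top hconv_meas htot_ne).mono fun t ht => ht.ne
  have hv_ae : ∀ᵐ t ∂(volume.restrict (Ioi (0:ℝ))),
      ENNReal.ofReal (v t) = ENNReal.ofReal (Q t) + ENNReal.ofReal β * conv t := by
    filter_upwards [hae_fin, ae_restrict_mem measurableSet_Ioi] with t h1 h2
    exact (hgen t h2 h1).1
  have hv_ae_real : ∀ᵐ t ∂(volume.restrict (Ioi (0:ℝ))),
      v t = Q t + β * (conv t).toReal := by
    filter_upwards [hae_fin, ae_restrict_mem measurableSet_Ioi] with t h1 h2
    exact (hgen t h2 h1).2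
  have hAESMv : AEStronglyMeasurable v (volume.restrict (Ioi 0)) := by
    have h1 : AEStronglyMeasurable (fun t => Q t + β * (conv t).toReal)
        (volume.restrict (Ioi 0)) := by
      refine hQ_int.aestronglyMeasurable.add ?_
      exact ((hconv_meas.ennreal_toReal).const_mul β).aestronglyMeasurable
    exact h1.congr (hv_ae_real.mono fun t ht => ht.symm)
  have hlv : ∫⁻ t in Ioi (0:ℝ), ENNReal.ofReal (v t)
      = Kqh + ENNReal.ofReal β * (Kqh * wu) := by
    rw [lintegral_congr_ae hv_ae]
    rw [lintegral_add_right _ (hconv_meas.const_mul _)]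
    congr 1
    · rw [hKqhdef]
      refine lintegral_congr_ae ?_
      filter_upwards [hQQ] with τ h
      rw [h]
    · rw [lintegral_const_mul' _ _ ENNReal.ofReal_ne_top, htot]
  have hfiv : IntegrableOn v (Ioi 0) volume := by
    refine ⟨hAESMv, ?_⟩
    rw [hasFiniteIntegral_def]
    have he : ∫⁻ t in Ioi (0:ℝ), ‖v t‖ₑ = ∫⁻ t in Ioi (0:ℝ), ENNReal.ofReal (v t) := by
      refine lintegral_congr fun t => Real.enorm_eq_ofReal (hv_nonneg t)
    rw [he, hlv]
    refine lt_top_iff_ne_top.2 (ENNReal.add_ne_top.2 ⟨hKqh_ne, ?_⟩)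
    exact ENNReal.mul_ne_top ENNReal.ofReal_ne_top (ENNReal.mul_ne_top hKqh_ne hwu_ne)
  refine ⟨hfiv, ?_⟩
  have hval : ∫ t in Ioi (0:ℝ), v t
      = (∫⁻ t in Ioi (0:ℝ), ENNReal.ofReal (v t)).toReal := by
    exact integral_eq_lintegral_of_nonneg_ae (ae_of_all _ hv_nonneg) hAESMv
  rw [hval, hlv, hKqh, hwu]
  rw [← ENNReal.ofReal_mul hKq_nonneg]
  rw [← ENNReal.ofReal_mul hβ.le]
  rw [← ENNReal.ofReal_add hKq_nonneg (mul_nonneg hβ.le (mul_nonneg hKq_nonneg hIu_nonneg))]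
  rw [ENNReal.toReal_ofReal
    (add_nonneg hKq_nonneg (mul_nonneg hβ.le (mul_nonneg hKq_nonneg hIu_nonneg)))]
  ring
end Stmt10Aux

open Stmt10Aux

/-- limit of the mean population size of a subcritical BRW on a
transient heavy-tailed lattice. -/
theorem stmt10 (d : ℕ) (hd : 0 < d) (α : ℝ) (hα : 0 < α)
    (hq : 1 < (d : ℝ) / α)
    (p : ℝ → (Fin d → ℤ) → (Fin d → ℤ) → ℝ)
    (hp_pos : ∀ t : ℝ, 0 < t → ∀ x y, 0 < p t x y)
    (hp_symm : ∀ t x y, p t x y = p t y x)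
    (hp_hom : ∀ t x y z, p t (x + z) (y + z) = p t x y)
    (h : ℝ) (hh : 0 < h)
    (hp_asymp : ∀ ε : ℝ, 0 < ε → ∃ T : ℝ, ∀ t : ℝ, T ≤ t →
      ∀ x y, |p t x y / (h * t ^ (-((d : ℝ) / α))) - 1| < ε)
    (hp_int : ∀ x y, IntegrableOn (fun t => p t x y) (Set.Ioi 0) volume)
    (G : (Fin d → ℤ) → (Fin d → ℤ) → ℝ)
    (hG : ∀ x y, G x y = ∫ t in Set.Ioi (0:ℝ), p t x y)
    (β : ℝ) (hβ_pos : 0 < β) (hβ : β < 1 / G 0 0)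
    (m : ℝ → (Fin d → ℤ) → ℝ) (mloc : ℝ → (Fin d → ℤ) → ℝ)
    (hm_nonneg : ∀ t x, 0 ≤ m t x) (hmloc_nonneg : ∀ t x, 0 ≤ mloc t x)
    (heq_total : ∀ t : ℝ, 0 ≤ t → ∀ x,
      m t x = 1 + β * ∫ s in (0:ℝ)..t, mloc s x)
    (heq_local : ∀ t : ℝ, 0 ≤ t → ∀ x,
      mloc t x = p t x 0 + β * ∫ s in (0:ℝ)..t, p (t - s) x 0 * mloc s 0) :
    ∀ x, Tendsto (fun t => m t x) atTop
      (nhds ((1 - β * (G 0 0 - G x 0)) / (1 - β * G 0 0))) := by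
  intro x
  have hP_int : IntegrableOn (fun t => p t 0 0) (Ioi 0) volume := hp_int 0 0
  have hP_pos : ∀ τ : ℝ, 0 < τ → 0 < p τ 0 0 := fun τ hτ => hp_pos τ hτ 0 0
  have hu_eq : ∀ t : ℝ, 0 ≤ t → mloc t 0 = p t 0 0
      + β * ∫ s in (0:ℝ)..t, p (t - s) 0 0 * mloc s 0 :=
    fun t ht => heq_local t ht 0
  have hu_nonneg : ∀ t, 0 ≤ mloc t 0 := fun t => hmloc_nonneg t 0
  have hK_pos : 0 < ∫ t in Ioi (0:ℝ), p t 0 0 := by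
    refine (setIntegral_pos_iff_support_of_nonneg_ae ?_ hP_int).2 ?_
    · filter_upwards [ae_restrict_mem measurableSet_Ioi] with τ hτ
      exact (hP_pos τ hτ).le
    · have hsub : Ioi (0:ℝ) ⊆ Function.support (fun t => p t 0 0) ∩ Ioi 0 :=
        fun τ hτ => ⟨(hP_pos τ hτ).ne', hτ⟩
      refine lt_of_lt_of_le ?_ (measure_mono hsub)
      rw [Real.volume_Ioi]
      exact ENNReal.zero_lt_top
  have hβK : β * ∫ t in Ioi (0:ℝ), p t 0 0 < 1 := by
    rw [hG 0 0] at hβ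
    rw [lt_div_iff₀ hK_pos] at hβ
    exact hβ
  have h1K : 0 < 1 - β * ∫ t in Ioi (0:ℝ), p t 0 0 := by linarith
  have humeas : AEStronglyMeasurable (fun s => mloc s 0) (volume.restrict (Ioi 0)) :=
    coreA (fun t => p t 0 0) (fun s => mloc s 0) β hP_int hP_pos hu_eq
  have hu_int : IntegrableOn (fun s => mloc s 0) (Ioi 0) volume :=
    coreB' (fun t => p t 0 0) (fun s => mloc s 0) β hβ_pos hP_int hP_pos hu_nonneg hu_eq hβK
  obtain ⟨-, hW⟩ := xval (fun t => p t 0 0) (fun s => mloc s 0) (fun s => mloc s 0)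
    β hβ_pos hP_int hP_pos humeas hu_nonneg hu_int hu_nonneg hu_eq
  have hWval : (∫ t in Ioi (0:ℝ), mloc t 0)
      = (∫ t in Ioi (0:ℝ), p t 0 0) / (1 - β * ∫ t in Ioi (0:ℝ), p t 0 0) := by
    rw [eq_div_iff h1K.ne']
    linear_combination hW
  -- the x equations
  have hPx_int : IntegrableOn (fun t => p t x 0) (Ioi 0) volume := hp_int x 0
  have hPx_pos : ∀ τ : ℝ, 0 < τ → 0 < p τ x 0 := fun τ hτ => hp_pos τ hτ x 0
  have hvx_eq : ∀ t : ℝ, 0 ≤ t → mloc t x = p t x 0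
      + β * ∫ s in (0:ℝ)..t, p (t - s) x 0 * mloc s 0 :=
    fun t ht => heq_local t ht x
  have hvx_nonneg : ∀ t, 0 ≤ mloc t x := fun t => hmloc_nonneg t x
  obtain ⟨hvx_int, hvx_val⟩ := xval (fun t => p t x 0) (fun s => mloc s 0)
    (fun t => mloc t x) β hβ_pos hPx_int hPx_pos humeas hu_nonneg hu_int hvx_nonneg hvx_eq
  -- limit
  have hlim0 : Tendsto (fun t : ℝ => ∫ s in (0:ℝ)..t, mloc s x) atTop
      (nhds (∫ s in Ioi (0:ℝ), mloc s x)) :=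
    intervalIntegral_tendsto_integral_Ioi 0 hvx_int tendsto_id
  have hlim : Tendsto (fun t => m t x) atTop
      (nhds (1 + β * ∫ s in Ioi (0:ℝ), mloc s x)) := by
    have h2 : Tendsto (fun t : ℝ => 1 + β * ∫ s in (0:ℝ)..t, mloc s x) atTop
        (nhds (1 + β * ∫ s in Ioi (0:ℝ), mloc s x)) :=
      (hlim0.const_mul β).const_add 1
    refine h2.congr' ?_
    filter_upwards [eventually_ge_atTop (0:ℝ)] with t ht
    exact (heq_total t ht x).symm
  have hfinal : 1 + β * ∫ s in Ioi (0:ℝ), mloc s x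
      = (1 - β * (G 0 0 - G x 0)) / (1 - β * G 0 0) := by
    rw [hG 0 0, hG x 0]
    rw [show (∫ s in Ioi (0:ℝ), mloc s x) = ∫ t in Ioi (0:ℝ), mloc t x from rfl]
    rw [hvx_val, hWval]
    field_simp
    ring
  rw [← hfinal]
  exact hlim
end

section
/- Let p, m : [0,∞) → (0,∞) be continuous with p(t) ~ h·t^{-d/α} and m(t) ~ c·t^{-d/α} as t → ∞, where d/α > 1, h, c > 0, and both p and m are integrable on [0,∞) with P = ∫₀^∞ p, M = ∫₀^∞ m. Then ∫₀^t p(t−s) m(s) ds ~ (M·h + P·c)·t^{-d/α} as t → ∞. -/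
open MeasureTheory Filter Set

lemma conv_half (q : ℝ) (hq0 : 0 < q) (p m : ℝ → ℝ)
    (hp_cont : Continuous p) (hm_cont : Continuous m)
    (hp_pos : ∀ t : ℝ, 0 ≤ t → 0 < p t) (hm_pos : ∀ t : ℝ, 0 ≤ t → 0 < m t)
    (h : ℝ) (hh : 0 < h)
    (hp : Tendsto (fun t : ℝ => p t / (h * t ^ (-q))) atTop (nhds 1))
    (hm_int : IntegrableOn m (Set.Ioi 0) volume) :
    Tendsto (fun t : ℝ => (∫ s in (0:ℝ)..(t/2), p (t - s) * m s) / (h * t ^ (-q)))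
      atTop (nhds (∫ s in Set.Ioi (0:ℝ), m s)) := by
  obtain ⟨T₀, hT₀⟩ := eventually_atTop.mp (hp.eventually (eventually_le_nhds one_lt_two))
  set T : ℝ := max T₀ 1 with hT
  have hT1 : (1:ℝ) ≤ T := le_max_right _ _
  have hTpos : (0:ℝ) < T := lt_of_lt_of_le one_pos hT1
  have key : Tendsto (fun t : ℝ => ∫ s in Set.Ioi (0:ℝ),
      (Set.Ioc (0:ℝ) (t/2)).indicator (fun s => p (t - s) * m s / (h * t ^ (-q))) s)
      atTop (nhds (∫ s in Set.Ioi (0:ℝ), m s)) := by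
    refine tendsto_integral_filter_of_dominated_convergence (fun s => 2 * 2 ^ q * m s)
      ?_ ?_ ?_ ?_
    · refine Eventually.of_forall fun t => ?_
      exact ((((hp_cont.comp (continuous_const.sub continuous_id)).mul hm_cont).div_const
        _).aestronglyMeasurable).indicator measurableSet_Ioc
    · filter_upwards [eventually_ge_atTop (2*T)] with t ht
      have htpos : 0 < t := lt_of_lt_of_le (by linarith) ht
      have htq : (0:ℝ) < t ^ (-q) := Real.rpow_pos_of_pos htpos _
      rw [ae_restrict_iff' measurableSet_Ioi]
      refine Eventually.of_forall fun s hs => ?_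
      have hs0 : (0:ℝ) < s := hs
      have hms : 0 < m s := hm_pos s hs0.le
      by_cases hsmem : s ∈ Set.Ioc (0:ℝ) (t/2)
      · have hts : T ≤ t - s := by
          obtain ⟨hs1, hs2⟩ := hsmem; linarith
        have hts0 : (0:ℝ) < t - s := lt_of_lt_of_le hTpos hts
        have hpb : p (t - s) ≤ 2 * (h * (t - s) ^ (-q)) := by
          have h2 := hT₀ (t - s) (le_trans (le_max_left _ _) hts)
          have hpos : (0:ℝ) < h * (t - s) ^ (-q) :=
            mul_pos hh (Real.rpow_pos_of_pos hts0 _)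
          exact (div_le_iff₀ hpos).mp h2
        have hrw : (t - s) ^ (-q) ≤ 2 ^ q * t ^ (-q) := by
          have h1 : (t - s) ^ (-q) ≤ (t/2) ^ (-q) := by
            refine Real.rpow_le_rpow_of_nonpos (by linarith) ?_ (neg_nonpos.mpr hq0.le)
            obtain ⟨_, hs2⟩ := hsmem; linarith
          have h2 : (t/2 : ℝ) ^ (-q) = 2 ^ q * t ^ (-q) := by
            rw [Real.div_rpow htpos.le (by norm_num),
              Real.rpow_neg (by norm_num : (0:ℝ) ≤ 2)]
            field_simp
          linarith [h2 ▸ h1]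
        rw [Set.indicator_of_mem hsmem]
        have hF_nonneg : 0 ≤ p (t - s) * m s / (h * t ^ (-q)) :=
          div_nonneg (mul_nonneg (hp_pos _ hts0.le).le hms.le) (mul_pos hh htq).le
        rw [Real.norm_eq_abs, abs_of_nonneg hF_nonneg, div_le_iff₀ (mul_pos hh htq)]
        have hb : p (t - s) ≤ 2 * 2 ^ q * (h * t ^ (-q)) := by
          calc p (t - s) ≤ 2 * (h * (t - s) ^ (-q)) := hpb
            _ ≤ 2 * (h * (2 ^ q * t ^ (-q))) := by nlinarith
            _ = 2 * 2 ^ q * (h * t ^ (-q)) := by ring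
        nlinarith [mul_le_mul_of_nonneg_right hb hms.le]
      · rw [Set.indicator_of_notMem hsmem]
        simp only [norm_zero]
        have h2q : (0:ℝ) < 2 * 2 ^ q := by positivity
        exact mul_nonneg h2q.le hms.le
    · exact hm_int.const_mul _
    · rw [ae_restrict_iff' measurableSet_Ioi]
      refine Eventually.of_forall fun s hs => ?_
      have hs0 : (0:ℝ) < s := hs
      have hfac : Tendsto (fun t : ℝ => p (t - s) / (h * t ^ (-q))) atTop (nhds 1) := by
        have l1 : Tendsto (fun t : ℝ => p (t - s) / (h * (t - s) ^ (-q))) atTop (nhds 1) := by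
          have l := hp.comp (tendsto_atTop_add_const_right atTop (-s) tendsto_id)
          simpa [Function.comp_def, sub_eq_add_neg] using l
        have l2 : Tendsto (fun t : ℝ => ((t - s)/t) ^ (-q)) atTop (nhds 1) := by
          have lt1 : Tendsto (fun t : ℝ => (t - s)/t) atTop (nhds 1) := by
            have l0 : Tendsto (fun t : ℝ => 1 - s / t) atTop (nhds (1 - 0)) :=
              tendsto_const_nhds.sub (tendsto_const_nhds.div_atTop tendsto_id)
            rw [sub_zero] at l0
            apply l0.congr'
            filter_upwards [eventually_gt_atTop (0:ℝ)] with t ht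
            field_simp
          have hcont : ContinuousAt (fun x : ℝ => x ^ (-q)) 1 :=
            Real.continuousAt_rpow_const 1 (-q) (Or.inl one_ne_zero)
          have := hcont.tendsto.comp lt1
          simpa [Function.comp_def, Real.one_rpow] using this
        have l3 := l1.mul l2
        rw [one_mul] at l3
        apply l3.congr'
        filter_upwards [eventually_gt_atTop s, eventually_gt_atTop (0:ℝ)] with t hts ht0
        have h1 : (0:ℝ) < t - s := by linarith
        have e1 : (t - s:ℝ) ^ (-q) ≠ 0 := (Real.rpow_pos_of_pos h1 _).ne'
        have e2 : (t:ℝ) ^ (-q) ≠ 0 := (Real.rpow_pos_of_pos ht0 _).ne'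
        rw [Real.div_rpow h1.le ht0.le]
        field_simp
      have lmul : Tendsto (fun t : ℝ => p (t - s) / (h * t ^ (-q)) * m s)
          atTop (nhds (1 * m s)) := hfac.mul_const _
      rw [one_mul] at lmul
      apply lmul.congr'
      filter_upwards [eventually_ge_atTop (2*s)] with t ht
      have hsmem : s ∈ Set.Ioc (0:ℝ) (t/2) := ⟨hs0, by linarith⟩
      rw [Set.indicator_of_mem hsmem]
      ring
  refine Tendsto.congr' ?_ key
  filter_upwards [eventually_gt_atTop (0:ℝ)] with t ht
  calc (∫ s in Set.Ioi (0:ℝ),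
        (Set.Ioc (0:ℝ) (t/2)).indicator (fun s => p (t - s) * m s / (h * t ^ (-q))) s)
      = ∫ s in Set.Ioc (0:ℝ) (t/2), p (t - s) * m s / (h * t ^ (-q)) := by
        rw [setIntegral_indicator measurableSet_Ioc,
          Set.inter_eq_right.mpr Set.Ioc_subset_Ioi_self]
    _ = (∫ s in Set.Ioc (0:ℝ) (t/2), p (t - s) * m s) / (h * t ^ (-q)) :=
        integral_div _ _
    _ = (∫ s in (0:ℝ)..(t/2), p (t - s) * m s) / (h * t ^ (-q)) := by
        rw [intervalIntegral.integral_of_le (by linarith : (0:ℝ) ≤ t/2)]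

/-- two-sided convolution asymptotics for two integrable functions
with the same power decay `t^{-d/α}`, `d/α > 1`. -/
theorem stmt14 (d : ℕ) (hd : 0 < d) (α : ℝ) (hα : 0 < α) (hq : 1 < (d : ℝ) / α)
    (p m : ℝ → ℝ) (hp_cont : Continuous p) (hm_cont : Continuous m)
    (hp_pos : ∀ t : ℝ, 0 ≤ t → 0 < p t) (hm_pos : ∀ t : ℝ, 0 ≤ t → 0 < m t)
    (h c : ℝ) (hh : 0 < h) (hc : 0 < c)
    (hp : Tendsto (fun t : ℝ => p t / (h * t ^ (-((d : ℝ) / α)))) atTop (nhds 1))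
    (hm : Tendsto (fun t : ℝ => m t / (c * t ^ (-((d : ℝ) / α)))) atTop (nhds 1))
    (hp_int : IntegrableOn p (Set.Ioi 0) volume)
    (hm_int : IntegrableOn m (Set.Ioi 0) volume)
    (P M : ℝ) (hP : P = ∫ t in Set.Ioi (0:ℝ), p t)
    (hM : M = ∫ t in Set.Ioi (0:ℝ), m t) :
    Tendsto
      (fun t : ℝ =>
        (∫ s in (0:ℝ)..t, p (t - s) * m s) /
          ((M * h + P * c) * t ^ (-((d : ℝ) / α))))
      atTop (nhds 1) := by
  set q : ℝ := (d : ℝ) / α with hqdef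
  have hq0 : 0 < q := lt_trans one_pos hq
  have convM := conv_half q hq0 p m hp_cont hm_cont hp_pos hm_pos h hh hp hm_int
  have convP := conv_half q hq0 m p hm_cont hp_cont hm_pos hp_pos c hc hm hp_int
  -- positivity of M and P
  have hMpos : 0 < M := by
    rw [hM]
    rw [setIntegral_pos_iff_support_of_nonneg_ae
      ((ae_restrict_iff' measurableSet_Ioi).mpr
        (Eventually.of_forall fun s hs => (hm_pos s (le_of_lt hs)).le)) hm_int]
    have hsub : Set.Ioi (0:ℝ) ⊆ Function.support m ∩ Set.Ioi 0 :=
      fun s hs => ⟨(hm_pos s (le_of_lt hs)).ne', hs⟩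
    refine lt_of_lt_of_le ?_ (measure_mono hsub)
    rw [Real.volume_Ioi]
    exact ENNReal.zero_lt_top
  have hPpos : 0 < P := by
    rw [hP]
    rw [setIntegral_pos_iff_support_of_nonneg_ae
      ((ae_restrict_iff' measurableSet_Ioi).mpr
        (Eventually.of_forall fun s hs => (hp_pos s (le_of_lt hs)).le)) hp_int]
    have hsub : Set.Ioi (0:ℝ) ⊆ Function.support p ∩ Set.Ioi 0 :=
      fun s hs => ⟨(hp_pos s (le_of_lt hs)).ne', hs⟩
    refine lt_of_lt_of_le ?_ (measure_mono hsub)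
    rw [Real.volume_Ioi]
    exact ENNReal.zero_lt_top
  have hden : (0:ℝ) < M * h + P * c := by positivity
  have final : Tendsto (fun t : ℝ =>
      (∫ s in (0:ℝ)..(t/2), p (t - s) * m s) / (h * t ^ (-q)) * (h / (M * h + P * c)) +
      (∫ s in (0:ℝ)..(t/2), m (t - s) * p s) / (c * t ^ (-q)) * (c / (M * h + P * c)))
      atTop (nhds ((∫ s in Set.Ioi (0:ℝ), m s) * (h / (M * h + P * c)) +
        (∫ s in Set.Ioi (0:ℝ), p s) * (c / (M * h + P * c)))) :=
    (convM.mul_const _).add (convP.mul_const _)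
  rw [← hM, ← hP] at final
  have hone : M * (h / (M * h + P * c)) + P * (c / (M * h + P * c)) = 1 := by
    field_simp
  rw [hone] at final
  refine Tendsto.congr' ?_ final
  filter_upwards [eventually_gt_atTop (0:ℝ)] with t ht
  have htq : (0:ℝ) < t ^ (-q) := Real.rpow_pos_of_pos ht _
  have hsplit : (∫ s in (0:ℝ)..t, p (t - s) * m s) =
      (∫ s in (0:ℝ)..(t/2), p (t - s) * m s) + (∫ s in (0:ℝ)..(t/2), m (t - s) * p s) := by
    have h1 : IntervalIntegrable (fun s => p (t - s) * m s) volume 0 (t/2) :=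
      ((hp_cont.comp (continuous_const.sub continuous_id)).mul hm_cont).intervalIntegrable _ _
    have h2 : IntervalIntegrable (fun s => p (t - s) * m s) volume (t/2) t :=
      ((hp_cont.comp (continuous_const.sub continuous_id)).mul hm_cont).intervalIntegrable _ _
    rw [← intervalIntegral.integral_add_adjacent_intervals h1 h2]
    congr 1
    have hstep : (∫ s in (t/2)..t, p (t - s) * m s) =
        ∫ s in (t/2)..t, (fun u => p u * m (t - u)) (t - s) := by
      refine intervalIntegral.integral_congr fun s _ => ?_
      simp [sub_sub_cancel]
    rw [hstep, intervalIntegral.integral_comp_sub_left (fun u => p u * m (t - u)) t]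
    rw [sub_self, (by ring : t - t/2 = t/2)]
    refine intervalIntegral.integral_congr fun s _ => ?_
    simp [mul_comm]
  rw [hsplit]
  have e1 : (t:ℝ) ^ (-q) ≠ 0 := htq.ne'
  field_simp
end

section
/- Let G : [0,∞) → (0,∞) be the Green function G(λ) = ∫₀^∞ e^{-λt} p(t) dt of a positive continuous integrable function p with p(t) ~ h t^{-d/α}, d/α ∈ (2,∞), and suppose additionally ∫₀^∞ (∫_t^∞ p(s) ds) dt =: γ < ∞. Then G(0) − G(λ) ~ γ·λ as λ → 0⁺, and consequently the function λ ↦ G(0)·G(λ)/(G(0) − G(λ)) satisfies G(0)G(λ)/(G(0) − G(λ)) ~ G(0)²/γ · λ^{−1} as λ → 0⁺. -/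
open MeasureTheory Filter Set

lemma aux_pos_integral {a : ℝ} {f : ℝ → ℝ} (hf : IntegrableOn f (Ioi a) volume)
    (hpos : ∀ t ∈ Ioi a, 0 < f t) : 0 < ∫ t in Ioi a, f t := by
  rw [setIntegral_pos_iff_support_of_nonneg_ae
    ((ae_restrict_iff' measurableSet_Ioi).2 (Eventually.of_forall fun x hx => (hpos x hx).le)) hf]
  have hsub : Ioi a ⊆ Function.support f ∩ Ioi a := fun x hx => ⟨(hpos x hx).ne', hx⟩
  have : (0:ENNReal) < volume (Ioi a) := by simp [Real.volume_Ioi]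
  exact lt_of_lt_of_le this (measure_mono hsub)

lemma aux_prim (p : ℝ → ℝ) (hp_cont : Continuous p) (x : ℝ) :
    HasDerivAt (fun t => ∫ s in (0:ℝ)..t, p s) (p x) x :=
  intervalIntegral.integral_hasDerivAt_right (hp_cont.intervalIntegrable 0 x)
    (hp_cont.stronglyMeasurableAtFilter _ _) hp_cont.continuousAt

lemma aux_tail_formula (p : ℝ → ℝ) (hp_cont : Continuous p)
    (hp_int : IntegrableOn p (Set.Ioi 0) volume) {t : ℝ} (ht : 0 ≤ t) :
    (∫ s in Ioi t, p s) = (∫ s in Ioi (0:ℝ), p s) - ∫ s in (0:ℝ)..t, p s := by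
  have hu : Ioc 0 t ∪ Ioi t = Ioi (0:ℝ) := Ioc_union_Ioi_eq_Ioi ht
  have hdisj : Disjoint (Ioc 0 t) (Ioi t) := Ioc_disjoint_Ioi le_rfl
  have h1 : IntegrableOn p (Ioc 0 t) volume := hp_cont.integrableOn_Ioc
  have h2 : IntegrableOn p (Ioi t) volume := hp_int.mono_set (Ioi_subset_Ioi ht)
  have := setIntegral_union hdisj measurableSet_Ioi h1 h2
  rw [hu] at this
  rw [this, intervalIntegral.integral_of_le ht]
  ring

/-- in the strongly transient case `d/α > 2`,
`G(0) − G(λ) ~ γ λ` and `G(0)G(λ)/(G(0) − G(λ)) ~ G(0)²/γ · λ⁻¹` as `λ → 0⁺`. -/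
theorem stmt16 (d : ℕ) (hd : 0 < d) (α : ℝ) (hα : 0 < α) (hq : 2 < (d : ℝ) / α)
    (p : ℝ → ℝ) (hp_cont : Continuous p) (hp_pos : ∀ t : ℝ, 0 ≤ t → 0 < p t)
    (hp_int : IntegrableOn p (Set.Ioi 0) volume)
    (h : ℝ) (hh : 0 < h)
    (hp : Tendsto (fun t : ℝ => p t / (h * t ^ (-((d : ℝ) / α)))) atTop (nhds 1))
    (G : ℝ → ℝ)
    (hG : ∀ l : ℝ, 0 ≤ l → G l = ∫ t in Set.Ioi (0:ℝ), Real.exp (-l * t) * p t)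
    (γ : ℝ)
    (hγ : γ = ∫ t in Set.Ioi (0:ℝ), ∫ s in Set.Ioi t, p s)
    (hγ_fin : IntegrableOn (fun t => ∫ s in Set.Ioi t, p s) (Set.Ioi 0) volume) :
    Tendsto (fun l : ℝ => (G 0 - G l) / (γ * l)) (nhdsWithin 0 (Set.Ioi 0)) (nhds 1) ∧
    Tendsto (fun l : ℝ => (G 0 * G l / (G 0 - G l)) / (G 0 ^ 2 / γ * l⁻¹))
      (nhdsWithin 0 (Set.Ioi 0)) (nhds 1) := by
  set P : ℝ → ℝ := fun t => ∫ s in Ioi t, p s with hP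
  have hG0 : G 0 = ∫ t in Ioi (0:ℝ), p t := by
    rw [hG 0 le_rfl]; simp
  have hP_meas : AEStronglyMeasurable P (volume.restrict (Ioi 0)) := hγ_fin.aestronglyMeasurable
  have hP_pos : ∀ t : ℝ, 0 ≤ t → 0 < P t := fun t ht =>
    aux_pos_integral (hp_int.mono_set (Ioi_subset_Ioi ht))
      (fun s hs => hp_pos s (ht.trans (le_of_lt hs)))
  have hP_deriv : ∀ x ∈ Ioi (0:ℝ), HasDerivAt P (-(p x)) x := by
    intro x hx
    have hform : HasDerivAt (fun t => (∫ s in Ioi (0:ℝ), p s) - ∫ s in (0:ℝ)..t, p s)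
        (-(p x)) x := by
      simpa using (aux_prim p hp_cont x).const_sub (∫ s in Ioi (0:ℝ), p s)
    refine hform.congr_of_eventuallyEq ?_
    filter_upwards [Ioi_mem_nhds hx] with y hy
    exact aux_tail_formula p hp_cont hp_int (le_of_lt hy)
  have hP_cont0 : ContinuousWithinAt P (Ici 0) 0 := by
    have hc : Continuous (fun t => (∫ s in Ioi (0:ℝ), p s) - ∫ s in (0:ℝ)..t, p s) :=
      continuous_const.sub
        (continuous_iff_continuousAt.2 fun x => (aux_prim p hp_cont x).continuousAt)
    refine (hc.continuousWithinAt).congr (fun y hy => aux_tail_formula p hp_cont hp_int hy)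
      (aux_tail_formula p hp_cont hp_int le_rfl)
  have hP_tendsto : Tendsto P atTop (nhds 0) := by
    have h1 : Tendsto (fun t => ∫ s in (0:ℝ)..t, p s) atTop
        (nhds (∫ s in Ioi (0:ℝ), p s)) :=
      intervalIntegral_tendsto_integral_Ioi 0 hp_int tendsto_id
    have h2 : Tendsto (fun t => (∫ s in Ioi (0:ℝ), p s) - ∫ s in (0:ℝ)..t, p s) atTop
        (nhds 0) := by
      have := (tendsto_const_nhds (x := (∫ s in Ioi (0:ℝ), p s)) (f := atTop)).sub h1
      simpa using this
    refine h2.congr' ?_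
    filter_upwards [Ioi_mem_atTop (0:ℝ)] with t ht
    exact (aux_tail_formula p hp_cont hp_int (le_of_lt ht)).symm
  -- integrability facts for fixed l > 0
  have hintA : ∀ l : ℝ, 0 < l →
      IntegrableOn (fun t => Real.exp (-l * t) * P t) (Ioi 0) volume := by
    intro l hl
    refine hγ_fin.mono' ?_ ?_
    · exact ((Real.continuous_exp.comp (continuous_const.mul continuous_id)).aestronglyMeasurable.restrict).mul hP_meas
    · refine (ae_restrict_iff' measurableSet_Ioi).2 (Eventually.of_forall fun t ht => ?_)
      have he : Real.exp (-l * t) ≤ 1 := Real.exp_le_one_iff.2 (by nlinarith [le_of_lt (mem_Ioi.1 ht)])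
      have : ‖Real.exp (-l * t) * P t‖ = Real.exp (-l * t) * ‖P t‖ := by
        rw [norm_mul, Real.norm_eq_abs, abs_of_pos (Real.exp_pos _)]
      rw [this]
      calc Real.exp (-l * t) * ‖P t‖ ≤ 1 * ‖P t‖ :=
            mul_le_mul_of_nonneg_right he (norm_nonneg _)
        _ = P t := by rw [one_mul, Real.norm_eq_abs, abs_of_pos (hP_pos t (le_of_lt ht))]
  have hintB : ∀ l : ℝ, 0 < l →
      IntegrableOn (fun t => Real.exp (-l * t) * p t) (Ioi 0) volume := by
    intro l hl
    refine hp_int.mono' ?_ ?_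
    · exact ((Real.continuous_exp.comp (continuous_const.mul continuous_id)).mul hp_cont).aestronglyMeasurable.restrict
    · refine (ae_restrict_iff' measurableSet_Ioi).2 (Eventually.of_forall fun t ht => ?_)
      have he : Real.exp (-l * t) ≤ 1 := Real.exp_le_one_iff.2 (by nlinarith [le_of_lt (mem_Ioi.1 ht)])
      have : ‖Real.exp (-l * t) * p t‖ = Real.exp (-l * t) * ‖p t‖ := by
        rw [norm_mul, Real.norm_eq_abs, abs_of_pos (Real.exp_pos _)]
      rw [this]
      calc Real.exp (-l * t) * ‖p t‖ ≤ 1 * ‖p t‖ :=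
            mul_le_mul_of_nonneg_right he (norm_nonneg _)
        _ = p t := by rw [one_mul, Real.norm_eq_abs, abs_of_pos (hp_pos t (le_of_lt ht))]
  -- key integration by parts identity
  have key : ∀ l : ℝ, 0 < l →
      G 0 - G l = l * ∫ t in Ioi (0:ℝ), Real.exp (-l * t) * P t := by
    intro l hl
    have hecont : Continuous (fun t : ℝ => Real.exp (-l * t)) :=
      Real.continuous_exp.comp (continuous_const.mul continuous_id)
    have hderiv : ∀ x ∈ Ioi (0:ℝ), HasDerivAt (fun t => (1 - Real.exp (-l * t)) * P t)
        ((l * Real.exp (-l * x)) * P x + (1 - Real.exp (-l * x)) * (-(p x))) x := by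
      intro x hx
      have he : HasDerivAt (fun t : ℝ => Real.exp (-l * t)) (Real.exp (-l * x) * (-l * 1)) x :=
        ((hasDerivAt_id x).const_mul (-l)).exp
      have h1 : HasDerivAt (fun t : ℝ => 1 - Real.exp (-l * t)) (l * Real.exp (-l * x)) x := by
        have := he.const_sub (1:ℝ)
        exact this.congr_deriv (by ring)
      exact h1.mul (hP_deriv x hx)
    have hi1 : IntegrableOn (fun t => (l * Real.exp (-l * t)) * P t) (Ioi 0) volume := by
      have := (hintA l hl).const_mul l
      simpa [mul_assoc, IntegrableOn] using this
    have hi2 : IntegrableOn (fun t => (1 - Real.exp (-l * t)) * (-(p t))) (Ioi 0) volume := by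
      refine hp_int.mono' ?_ ?_
      · exact ((continuous_const.sub hecont).mul hp_cont.neg).aestronglyMeasurable.restrict
      · refine (ae_restrict_iff' measurableSet_Ioi).2 (Eventually.of_forall fun t ht => ?_)
        have he : Real.exp (-l * t) ≤ 1 := Real.exp_le_one_iff.2 (by nlinarith [le_of_lt (mem_Ioi.1 ht)])
        have he0 : 0 < Real.exp (-l * t) := Real.exp_pos _
        have hpt : 0 < p t := hp_pos t (le_of_lt ht)
        rw [norm_mul, norm_neg, Real.norm_eq_abs, Real.norm_eq_abs,
          abs_of_nonneg (by linarith : (0:ℝ) ≤ 1 - Real.exp (-l * t)), abs_of_pos hpt]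
        nlinarith
    have hcont0 : ContinuousWithinAt (fun t => (1 - Real.exp (-l * t)) * P t) (Ici 0) 0 :=
      ((continuous_const.sub hecont).continuousWithinAt).mul hP_cont0
    have hlim : Tendsto (fun t => (1 - Real.exp (-l * t)) * P t) atTop (nhds 0) := by
      refine squeeze_zero_norm' ?_ (by simpa using hP_tendsto.abs)
      filter_upwards [Ioi_mem_atTop (0:ℝ)] with t ht
      have he : Real.exp (-l * t) ≤ 1 := Real.exp_le_one_iff.2 (by nlinarith [le_of_lt (mem_Ioi.1 ht)])
      have he0 : 0 < Real.exp (-l * t) := Real.exp_pos _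
      rw [norm_mul, Real.norm_eq_abs, Real.norm_eq_abs,
        abs_of_nonneg (by linarith : (0:ℝ) ≤ 1 - Real.exp (-l * t))]
      nlinarith [abs_nonneg (P t)]
    have hFTC := integral_Ioi_of_hasDerivAt_of_tendsto hcont0 hderiv (hi1.add hi2) hlim
    have hf0 : (1 - Real.exp (-l * (0:ℝ))) * P 0 = 0 := by simp
    have h0 : (∫ t in Ioi (0:ℝ), ((l * Real.exp (-l * t)) * P t
        + (1 - Real.exp (-l * t)) * (-(p t)))) = 0 := by
      rw [hFTC, hf0]; ring
    rw [integral_add hi1 hi2] at h0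
    have hA : (∫ t in Ioi (0:ℝ), (l * Real.exp (-l * t)) * P t)
        = l * ∫ t in Ioi (0:ℝ), Real.exp (-l * t) * P t := by
      rw [← integral_const_mul]
      congr 1; funext t; ring
    have hB : (∫ t in Ioi (0:ℝ), (1 - Real.exp (-l * t)) * (-(p t)))
        = -((∫ t in Ioi (0:ℝ), p t) - ∫ t in Ioi (0:ℝ), Real.exp (-l * t) * p t) := by
      rw [← integral_sub hp_int (hintB l hl), ← integral_neg]
      congr 1; funext t; ring
    rw [hA, hB] at h0
    rw [hG0, hG l (le_of_lt hl)]
    linarith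
  -- positivity
  have γpos : 0 < γ := by
    rw [hγ]; exact aux_pos_integral hγ_fin fun t ht => hP_pos t (le_of_lt ht)
  have G0pos : 0 < G 0 := by
    rw [hG0]; exact aux_pos_integral hp_int fun t ht => hp_pos t (le_of_lt ht)
  have hsubpos : ∀ l : ℝ, 0 < l → 0 < G 0 - G l := by
    intro l hl
    rw [key l hl]
    exact mul_pos hl (aux_pos_integral (hintA l hl)
      fun t ht => mul_pos (Real.exp_pos _) (hP_pos t (le_of_lt ht)))
  -- dominated convergence limits
  have hexp_lim : ∀ t : ℝ, Tendsto (fun l : ℝ => Real.exp (-l * t))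
      (nhdsWithin 0 (Ioi 0)) (nhds 1) := by
    intro t
    have hc : Continuous fun l : ℝ => Real.exp (-l * t) :=
      Real.continuous_exp.comp ((continuous_neg.comp continuous_id).mul continuous_const)
    have := hc.tendsto 0
    simp only [neg_zero, zero_mul, Real.exp_zero] at this
    exact this.mono_left nhdsWithin_le_nhds
  have limA : Tendsto (fun l : ℝ => ∫ t in Ioi (0:ℝ), Real.exp (-l * t) * P t)
      (nhdsWithin 0 (Ioi 0)) (nhds γ) := by
    rw [hγ]
    refine tendsto_integral_filter_of_dominated_convergence (μ := volume.restrict (Ioi 0))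
      (F := fun l t => Real.exp (-l * t) * P t) (f := P) (fun t => |P t|)
      (Eventually.of_forall fun l =>
        ((Real.continuous_exp.comp (continuous_const.mul continuous_id)).aestronglyMeasurable.restrict).mul hP_meas)
      ?_ hγ_fin.abs
      (Eventually.of_forall fun t => by simpa using (hexp_lim t).mul_const (P t))
    filter_upwards [self_mem_nhdsWithin] with l hl
    refine (ae_restrict_iff' measurableSet_Ioi).2 (Eventually.of_forall fun t ht => ?_)
    have he : Real.exp (-l * t) ≤ 1 :=
      Real.exp_le_one_iff.2 (by nlinarith [le_of_lt (mem_Ioi.1 ht), (mem_Ioi.1 hl)])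
    rw [norm_mul, Real.norm_eq_abs, Real.norm_eq_abs, abs_of_pos (Real.exp_pos _)]
    nlinarith [abs_nonneg (P t), Real.exp_pos (-l * t)]
  have limG : Tendsto G (nhdsWithin 0 (Ioi 0)) (nhds (G 0)) := by
    have hmain : Tendsto (fun l : ℝ => ∫ t in Ioi (0:ℝ), Real.exp (-l * t) * p t)
        (nhdsWithin 0 (Ioi 0)) (nhds (∫ t in Ioi (0:ℝ), p t)) := by
      refine tendsto_integral_filter_of_dominated_convergence (μ := volume.restrict (Ioi 0))
        (F := fun l t => Real.exp (-l * t) * p t) (f := p) (fun t => |p t|)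
        (Eventually.of_forall fun l =>
          ((Real.continuous_exp.comp (continuous_const.mul continuous_id)).mul hp_cont).aestronglyMeasurable.restrict)
        ?_ hp_int.abs
        (Eventually.of_forall fun t => by simpa using (hexp_lim t).mul_const (p t))
      filter_upwards [self_mem_nhdsWithin] with l hl
      refine (ae_restrict_iff' measurableSet_Ioi).2 (Eventually.of_forall fun t ht => ?_)
      have he : Real.exp (-l * t) ≤ 1 :=
        Real.exp_le_one_iff.2 (by nlinarith [le_of_lt (mem_Ioi.1 ht), (mem_Ioi.1 hl)])
      rw [norm_mul, Real.norm_eq_abs, Real.norm_eq_abs, abs_of_pos (Real.exp_pos _)]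
      nlinarith [abs_nonneg (p t), Real.exp_pos (-l * t)]
    rw [← hG0] at hmain
    refine hmain.congr' ?_
    filter_upwards [self_mem_nhdsWithin] with l hl
    exact (hG l (le_of_lt hl)).symm
  -- part 1
  have part1 : Tendsto (fun l : ℝ => (G 0 - G l) / (γ * l))
      (nhdsWithin 0 (Ioi 0)) (nhds 1) := by
    have h1 := limA.div_const γ
    rw [div_self γpos.ne'] at h1
    refine h1.congr' ?_
    filter_upwards [self_mem_nhdsWithin] with l hl
    rw [key l hl, mul_comm γ l, mul_div_mul_left _ _ (ne_of_gt hl)]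
  refine ⟨part1, ?_⟩
  -- part 2
  have t2 : Tendsto (fun l : ℝ => G l / G 0) (nhdsWithin 0 (Ioi 0)) (nhds 1) := by
    have := limG.div_const (G 0)
    rwa [div_self G0pos.ne'] at this
  have t1inv : Tendsto (fun l : ℝ => ((G 0 - G l) / (γ * l))⁻¹)
      (nhdsWithin 0 (Ioi 0)) (nhds 1) := by
    have := part1.inv₀ one_ne_zero
    simpa using this
  have tprod := t2.mul t1inv
  rw [one_mul] at tprod
  refine tprod.congr' ?_
  filter_upwards [self_mem_nhdsWithin] with l hl
  have hl' : (0:ℝ) < l := hl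
  have h1 : G 0 - G l ≠ 0 := (hsubpos l hl').ne'
  rw [inv_div]
  field_simp
end
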